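/- arXiv:1501.00352 — 3 statements merged into one kernel-verified Lean document; each statement's English description precedes it below -/
import Mathlib

section
/- Let S^{n−1}_∞ be a great (n−1)-sphere in S^n and suppose Γ ≤ SL±(n+1,ℝ) acts cocompactly on a properly convex open domain Ω ⊂ S^{n−1}_∞. Let v ∈ S^{n*} be the point dual to S^{n−1}_∞, with antipode v−. Then the dual group Γ* acts on a properly convex tube B ⊂ S^{n*} with vertices v and v−, and the space R_v(B) of directions at v of the open great segments constituting the interior of B is projectively diffeomorphic, together with the Γ*-action, to the dual domain of Ω; that is, Ω and R_v(B) form a pair of dual domains. -/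
/-!
Common definitions for formalizing "A classification of ends of properly convex
real projective orbifolds II" (Choi).

We model the projective sphere `S^n` as the unit sphere of `ℝ^{n+1}`
(the quotient of `ℝ^{n+1} ∖ {0}` by positive scalars), on which matrices of
`GL(n+1,ℝ)` act projectively after radial normalization.  Convexity of subsets
of `S^n` is expressed through convexity of the corresponding radial cones, and
the Hilbert metric is expressed through the standard cone-gauge formula.
Smoothness of strictly convex boundary hypersurfaces is modeled by uniqueness
of supporting hyperplanes (`C¹`) together with strict convexity, and
"open cell" by homeomorphism with a Euclidean space.
-/

open Matrix Set

noncomputable section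

namespace CEnds

/-- `ℝ^{n+1}` with its Euclidean structure. -/
abbrev Vn (n : ℕ) := EuclideanSpace ℝ (Fin (n + 1))

/-- `(n+1) × (n+1)` real matrices. -/
abbrev Mat (n : ℕ) := Matrix (Fin (n + 1)) (Fin (n + 1)) ℝ

/-- the general linear group `GL(n+1, ℝ)`. -/
abbrev GLn (n : ℕ) := Matrix.GeneralLinearGroup (Fin (n + 1)) ℝ

variable {n : ℕ}

/-- the unit-sphere model of the projective sphere `S^n`. -/
def Sph (n : ℕ) : Set (Vn n) := {v : Vn n | ‖v‖ = 1}

/-- the subset `SL±(n+1,ℝ)` of `GL(n+1,ℝ)`: determinant `±1`. -/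
def SLpm (n : ℕ) : Set (GLn n) := {g : GLn n | |((g : Mat n)).det| = 1}

/-- the linear action of a matrix on `ℝ^{n+1}`. -/
def mvec (g : Mat n) (v : Vn n) : Vn n :=
  (EuclideanSpace.equiv (Fin (n + 1)) ℝ).symm (g.mulVec ((EuclideanSpace.equiv (Fin (n + 1)) ℝ) v))

/-- radial normalization to the unit sphere. -/
def nrm (v : Vn n) : Vn n := ‖v‖⁻¹ • v

/-- the projective action of a matrix on the sphere `S^n`. -/
def pact (g : Mat n) (v : Vn n) : Vn n := nrm (mvec g v)

/-- the radial cone (without `0`) over a subset of the sphere. -/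
def rayCone (A : Set (Vn n)) : Set (Vn n) := {w | ∃ v ∈ A, ∃ c : ℝ, 0 < c ∧ w = c • v}

/-- a convex subset of `S^n`: contained in an affine chart and convex there. -/
def IsConvexSub (A : Set (Vn n)) : Prop :=
  A ⊆ Sph n ∧ Convex ℝ (insert (0 : Vn n) (rayCone A)) ∧
    ∃ f : Vn n →ₗ[ℝ] ℝ, ∀ v ∈ A, 0 < f v

/-- a properly convex subset of `S^n`: its closure is compact in an affine chart. -/
def IsPCSub (A : Set (Vn n)) : Prop :=
  A ⊆ Sph n ∧ Convex ℝ (insert (0 : Vn n) (rayCone A)) ∧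
    ∃ f : Vn n →ₗ[ℝ] ℝ, ∀ v ∈ closure A, 0 < f v

/-- relative openness in the sphere `S^n`. -/
def IsOpenInS (A : Set (Vn n)) : Prop := ∃ U : Set (Vn n), IsOpen U ∧ A = U ∩ Sph n

/-- a properly convex domain in `S^n`. -/
def IsPCDom (A : Set (Vn n)) : Prop := IsPCSub A ∧ IsOpenInS A ∧ A.Nonempty

/-- a convex domain in `S^n`. -/
def IsConvexDom (A : Set (Vn n)) : Prop := IsConvexSub A ∧ IsOpenInS A ∧ A.Nonempty

/-- the topological boundary `Bd A` of `A` inside `S^n`. -/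
def BdS (A : Set (Vn n)) : Set (Vn n) := closure A ∩ closure (Sph n \ A)

/-- the interior of `A` inside `S^n`. -/
def IntS (A : Set (Vn n)) : Set (Vn n) :=
  {x | x ∈ A ∧ ∃ ε : ℝ, 0 < ε ∧ ∀ y ∈ Sph n, ‖y - x‖ < ε → y ∈ A}

/-- the closed projective segment between `p` and `q`. -/
def sphSeg (p q : Vn n) : Set (Vn n) :=
  {x | ∃ a b : ℝ, 0 ≤ a ∧ 0 ≤ b ∧ 0 < a + b ∧ x = nrm (a • p + b • q)}

/-- the open projective segment between `p` and `q`. -/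
def sphSegOpen (p q : Vn n) : Set (Vn n) :=
  {x | ∃ a b : ℝ, 0 < a ∧ 0 < b ∧ x = nrm (a • p + b • q)}

/-- the join `{v} * A` of a point and a set. -/
def joinPt (v : Vn n) (A : Set (Vn n)) : Set (Vn n) :=
  {x | ∃ a b : ℝ, ∃ p ∈ A, 0 ≤ a ∧ 0 ≤ b ∧ 0 < a + b ∧ x = nrm (a • v + b • p)}

/-- the strict join `A * B` of two sets. -/
def strictJoin2 (A B : Set (Vn n)) : Set (Vn n) :=
  {x | ∃ a b : ℝ, ∃ p ∈ A, ∃ q ∈ B, 0 ≤ a ∧ 0 ≤ b ∧ 0 < a + b ∧ x = nrm (a • p + b • q)}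

/-- the strict join `K 0 * ⋯ * K (k-1)` of a finite family of sets. -/
def strictJoinF {k : ℕ} (K : Fin k → Set (Vn n)) : Set (Vn n) :=
  {x | ∃ c : Fin k → ℝ, ∃ p : Fin k → Vn n, (∀ i, 0 ≤ c i) ∧ (∀ i, p i ∈ K i) ∧
    (∃ i, 0 < c i) ∧ x = nrm (∑ i, c i • p i)}

/-- `closure Om` is a (nontrivial) strict join. -/
def IsStrictJoinSet (C : Set (Vn n)) : Prop :=
  ∃ (V₁ V₂ : Submodule ℝ (Vn n)) (A B : Set (Vn n)),
    V₁ ⊓ V₂ = ⊥ ∧ A.Nonempty ∧ B.Nonempty ∧ A ⊆ ↑V₁ ∧ B ⊆ ↑V₂ ∧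
    A ⊆ Sph n ∧ B ⊆ Sph n ∧ C = strictJoin2 A B

/-- the sphere `S^{n-1}_v` of directions at `v`. -/
def linkSph (v : Vn n) : Set (Vn n) := {u : Vn n | ‖u‖ = 1 ∧ (inner ℝ u v : ℝ) = 0}

/-- relative openness in the link sphere at `v`. -/
def IsOpenInLink (v : Vn n) (A : Set (Vn n)) : Prop :=
  ∃ U : Set (Vn n), IsOpen U ∧ A = U ∩ linkSph v

/-- the component of `x` orthogonal to the unit vector `v`. -/
def perp (v x : Vn n) : Vn n := x - (inner ℝ x v : ℝ) • v

/-- the linear map induced by `g` on `ℝ^{n+1}/⟨v⟩ ≅ v^⊥` (for `g` fixing the ray of `v`). -/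
def linkMap (g : Mat n) (v x : Vn n) : Vn n := perp v (mvec g x)

/-- the projective action induced by `g` on the link sphere of `v`. -/
def linkAct (g : Mat n) (v u : Vn n) : Vn n := nrm (linkMap g v u)

/-- the boundary of a subset of the link sphere of `v`, inside the link sphere. -/
def BdLink (v : Vn n) (A : Set (Vn n)) : Set (Vn n) := closure A ∩ closure (linkSph v \ A)

/-- the boundary of `A` inside the unit sphere of the linear span of `A`. -/
def relBd (A : Set (Vn n)) : Set (Vn n) :=
  closure A ∩ closure ((Sph n ∩ ((Submodule.span ℝ A : Submodule ℝ (Vn n)) : Set (Vn n))) \ A)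

/-- the relative interior of `A` (interior within the sphere of its span). -/
def relInt (A : Set (Vn n)) : Set (Vn n) := A \ relBd A

/-- the open tube over `Sg ⊆ S^{n-1}_v`: the union of open great segments from `v` to `-v`
in the directions of `Sg`. -/
def tubeCore (v : Vn n) (Sg : Set (Vn n)) : Set (Vn n) :=
  {x | ∃ u ∈ Sg, ∃ t : ℝ, 0 < t ∧ t < Real.pi ∧ x = Real.cos t • v + Real.sin t • u}

/-- the tube `T_v(Sg)`: the closure of the above. -/
def tube (v : Vn n) (Sg : Set (Vn n)) : Set (Vn n) := closure (tubeCore v Sg)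

/-- the open great half-circle from `v` through (the direction of) `x`. -/
def greatRay (v x : Vn n) : Set (Vn n) :=
  {z | ‖z‖ = 1 ∧ ∃ a b : ℝ, 0 < b ∧ z = a • v + b • perp v x}

/-- `R_v(Om)`: the set of directions at `v` of open segments from `v` contained in `Om`. -/
def dirSet (Om : Set (Vn n)) (v : Vn n) : Set (Vn n) :=
  {u | u ∈ linkSph v ∧ ∃ t : ℝ, 0 < t ∧ t < Real.pi ∧
    ∀ s : ℝ, 0 < s → s < t → Real.cos s • v + Real.sin s • u ∈ Om}

/- ### eigenvalue data -/

/-- complexification of a real matrix. -/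
def cplx (g : Mat n) : Matrix (Fin (n + 1)) (Fin (n + 1)) ℂ := g.map (fun x => (x : ℂ))

/-- the set of complex eigenvalues of `g`. -/
def eigSet (g : Mat n) : Set ℂ := (cplx g).charpoly.rootSet ℂ

/-- the largest modulus of the eigenvalues of `g`. -/
def eigMax (g : Mat n) : ℝ := sSup ((fun μ : ℂ => ‖μ‖) '' eigSet g)

/-- the smallest modulus of the eigenvalues of `g`. -/
def eigMin (g : Mat n) : ℝ := sInf ((fun μ : ℂ => ‖μ‖) '' eigSet g)

/-- the scalar by which `g` acts along the ray of `v` (a junk value if `v` is not an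
eigenvector). -/
def eigAt (g : Mat n) (v : Vn n) : ℝ := sSup {c : ℝ | mvec g v = c • v}

/-- `g` fixes the ray over `v`, with a positive eigenvalue. -/
def FixesRay (g : Mat n) (v : Vn n) : Prop := ∃ c : ℝ, 0 < c ∧ mvec g v = c • v

/-- `a` is the attracting fixed point of `g` on `S^n`: the largest eigenvalue-modulus is
attained by a (unique) positive eigenvalue whose eigenspace is the line over `a`. -/
def IsAttractingFP (g : Mat n) (a : Vn n) : Prop :=
  a ∈ Sph n ∧ mvec g a = eigMax g • a ∧
  (∀ b ∈ Sph n, mvec g b = eigMax g • b → b = a ∨ b = -a) ∧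
  (∀ μ ∈ eigSet g, ‖μ‖ = eigMax g → μ = (eigMax g : ℂ))

/-- membership of a complex vector in the complexification of a real subspace. -/
def inCplxSpan (W : Submodule ℝ (Vn n)) (x : Fin (n + 1) → ℂ) : Prop :=
  ((EuclideanSpace.equiv (Fin (n + 1)) ℝ).symm (fun k => (x k).re) ∈ W) ∧
  ((EuclideanSpace.equiv (Fin (n + 1)) ℝ).symm (fun k => (x k).im) ∈ W)

/-- `μ` is an eigenvalue of the restriction of `g` to the invariant subspace `W`. -/
def hasEigOn (g : Mat n) (W : Submodule ℝ (Vn n)) (μ : ℂ) : Prop :=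
  ∃ x : Fin (n + 1) → ℂ, x ≠ 0 ∧ inCplxSpan W x ∧ (cplx g).mulVec x = μ • x

/- ### the Hilbert metric, via the cone gauge -/

/-- the cone gauge `M(x/y) = inf { t > 0 | t•y - x ∈ clo C }`. -/
def cgauge (C : Set (Vn n)) (x y : Vn n) : ℝ :=
  sInf {t : ℝ | 0 < t ∧ t • y - x ∈ closure C}

/-- the Hilbert (cross-ratio) distance on the projectivization of the cone `C`,
`d([x],[y]) = log (M(x/y) M(y/x))`. -/
def hDist (C : Set (Vn n)) (x y : Vn n) : ℝ := Real.log (cgauge C x y * cgauge C y x)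

/-- translation length `leng` of the linear action of `g` on the projectivized cone `C`. -/
def lengLin (C : Set (Vn n)) (g : Mat n) : ℝ :=
  sInf {r : ℝ | ∃ x ∈ C, r = hDist C x (mvec g x)}

/-- translation length of the induced action of `g` on the link of `v`, on the cone `C ⊆ v^⊥`. -/
def lengLink (v : Vn n) (C : Set (Vn n)) (g : Mat n) : ℝ :=
  sInf {r : ℝ | ∃ x ∈ C, r = hDist C x (linkMap g v x)}

/- ### group actions -/

/-- the projective action of a group element on the sphere. -/
def sphAct (g : GLn n) : Vn n → Vn n := pact ((g : Mat n))

/-- the induced action of a group element on the link sphere of `v`. -/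
def lnkAct (v : Vn n) (g : GLn n) : Vn n → Vn n := fun u => linkAct ((g : Mat n)) v u

/-- a properly discontinuous action (with respect to an abstract action `act`). -/
def ProperlyDiscA (act : GLn n → Vn n → Vn n) (Γ : Subgroup (GLn n)) (Om : Set (Vn n)) : Prop :=
  ∀ K : Set (Vn n), K ⊆ Om → IsCompact K →
    {g : GLn n | g ∈ Γ ∧ (act g '' K ∩ K).Nonempty}.Finite

/-- a cocompact action (with respect to an abstract action `act`). -/
def CocompactA (act : GLn n → Vn n → Vn n) (Γ : Subgroup (GLn n)) (Om : Set (Vn n)) : Prop :=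
  ∃ K : Set (Vn n), K ⊆ Om ∧ IsCompact K ∧ ∀ x ∈ Om, ∃ g ∈ Γ, act g x ∈ K

/-- discreteness of a subgroup of `GL(n+1,ℝ)`. -/
def IsDiscreteSubgroup (Γ : Subgroup (GLn n)) : Prop :=
  ∀ K : Set (Mat n), IsCompact K → {g : GLn n | g ∈ Γ ∧ ((g : Mat n)) ∈ K}.Finite

/-- the uniform middle-eigenvalue condition with respect to the fixed point `v`. -/
def UMECat (Γ : Subgroup (GLn n)) (v : Vn n) (Sg : Set (Vn n)) : Prop :=
  ∃ C : ℝ, 1 < C ∧ ∀ g ∈ Γ,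
    C⁻¹ * lengLink v (rayCone Sg) ((g : Mat n)) ≤
        Real.log (eigMax ((g : Mat n)) / eigAt ((g : Mat n)) v) ∧
    Real.log (eigMax ((g : Mat n)) / eigAt ((g : Mat n)) v) ≤
        C * lengLink v (rayCone Sg) ((g : Mat n))

/-- the uniform middle-eigenvalue condition with respect to the invariant hyperplane
`P = w^⊥` (the relevant eigenvalue is the one of `g` on `ℝ^{n+1}/P`, i.e. of `gᵀ` at `w`). -/
def UMECperp (Γ : Subgroup (GLn n)) (w : Vn n) (Sg : Set (Vn n)) : Prop :=
  ∃ C : ℝ, 1 < C ∧ ∀ g ∈ Γ,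
    C⁻¹ * lengLin (rayCone Sg) ((g : Mat n)) ≤
        Real.log (eigMax ((g : Mat n)) / eigAt (((g : Mat n))ᵀ) w) ∧
    Real.log (eigMax ((g : Mat n)) / eigAt (((g : Mat n))ᵀ) w) ≤
        C * lengLin (rayCone Sg) ((g : Mat n))

/-- admissibility of the action of `Γ` on the properly convex domain `Sg`
(with respect to an abstract action `act`): `clo Sg` is a strict join
`K 0 * ⋯ * K (k-1)` of singletons or strictly convex compact sets in independent
subspaces, factor subgroups `G i` act properly discontinuously and cocompactly on the
factors and trivially on the other factors, a virtual center `Z ≅ ℤ^{k-1}` acts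
trivially on each factor, and a finite-index subgroup `Γ'` of `Γ` is isomorphic to
`Z × G 0 × ⋯ × G (k-1)`. -/
def IsAdmissibleA (act : GLn n → Vn n → Vn n) (Γ : Subgroup (GLn n)) (Sg : Set (Vn n)) : Prop :=
  ∃ (k : ℕ) (K : Fin k → Set (Vn n)) (G : Fin k → Subgroup (GLn n)) (Z Γ' : Subgroup (GLn n)),
    0 < k ∧
    closure Sg = strictJoinF K ∧
    (∀ (c : Fin k → ℝ) (p : Fin k → Vn n), (∀ i, p i ∈ K i) →
        (∑ i, c i • p i) = 0 → ∀ i, c i = 0) ∧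
    (∀ i, (∃ x, K i = {x}) ∨ (IsPCSub (K i) ∧ IsCompact (K i) ∧
        ∀ p q : Vn n, p ∈ relBd (K i) → q ∈ relBd (K i) → sphSeg p q ⊆ relBd (K i) → p = q)) ∧
    (∀ i, G i ≤ Γ) ∧
    (∀ i, ∀ g ∈ G i, act g '' K i = K i) ∧
    (∀ i, ProperlyDiscA act (G i) (relInt (K i)) ∧ CocompactA act (G i) (relInt (K i))) ∧
    (∀ i j, j ≠ i → ∀ g ∈ G i, ∀ x ∈ K j, act g x = x) ∧
    Z ≤ Γ ∧ (∀ g ∈ Z, ∀ i, ∀ x ∈ K i, act g x = x) ∧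
    Nonempty (↥Z ≃* Multiplicative (Fin (k - 1) → ℤ)) ∧
    Γ' ≤ Γ ∧ (Γ'.subgroupOf Γ).index ≠ 0 ∧
    Nonempty (↥Γ' ≃* ↥Z × ((i : Fin k) → ↥(G i)))

/-- virtual factorability: some finite-index subgroup has infinite center. -/
def VirtFactorable (Γ : Subgroup (GLn n)) : Prop :=
  ∃ Γ' : Subgroup (GLn n), Γ' ≤ Γ ∧ (Γ'.subgroupOf Γ).index ≠ 0 ∧
    ((Subgroup.center ↥Γ' : Subgroup ↥Γ') : Set ↥Γ').Infinite

/- ### supporting hyperplanes, smoothness and strict convexity -/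

/-- `f` is a supporting linear functional of `A` at `p`. -/
def SuppAt (A : Set (Vn n)) (f : Vn n →ₗ[ℝ] ℝ) (p : Vn n) : Prop :=
  f ≠ 0 ∧ f p = 0 ∧ ∀ x ∈ A, 0 ≤ f x

/-- `A` has a unique supporting hyperplane at `p` (i.e. `Bd A` is `C¹` at `p`). -/
def UniqueSuppAt (A : Set (Vn n)) (p : Vn n) : Prop :=
  (∃ f : Vn n →ₗ[ℝ] ℝ, SuppAt A f p) ∧
    ∀ f f' : Vn n →ₗ[ℝ] ℝ, SuppAt A f p → SuppAt A f' p → ∃ c : ℝ, 0 < c ∧ f' = c • f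

/-- `A` is strictly convex at `p`: no nondegenerate segment of `clo A` has `p` in its
interior. -/
def StrictlyConvexAt (A : Set (Vn n)) (p : Vn n) : Prop :=
  ∀ q r : Vn n, q ∈ closure A → r ∈ closure A → p ∈ sphSegOpen q r → q = r

/-- `A` is a smoothly embedded strictly convex open `d`-cell in the boundary of `L`
(smoothness is modeled by uniqueness of supporting hyperplanes). -/
def IsBoundaryCell (L A : Set (Vn n)) (d : ℕ) : Prop :=
  A.Nonempty ∧ A ⊆ BdS L ∧
  (∀ p ∈ A, UniqueSuppAt L p) ∧
  (∀ p ∈ A, StrictlyConvexAt L p) ∧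
  Nonempty (↥A ≃ₜ EuclideanSpace ℝ (Fin d))

/- ### lenses and lens-cones -/

/-- `L` is a lens with boundary components `A` and `B`. -/
def IsLens (L A B : Set (Vn n)) : Prop :=
  IsPCDom L ∧ BdS L = A ∪ B ∧ Disjoint A B ∧
  IsBoundaryCell L A (n - 1) ∧ IsBoundaryCell L B (n - 1)

/-- `v * L` is a lens-cone over the lens `L` with top `A` and bottom `B`. -/
def IsLensCone (v : Vn n) (L A B : Set (Vn n)) : Prop :=
  IsLens L A B ∧ v ∉ closure L ∧ IsPCSub (joinPt v L) ∧
  joinPt v L = joinPt v A ∧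
  ∀ x ∈ joinPt v L, x ≠ v → ∃! y : Vn n, y ∈ B ∧ y ∈ greatRay v x

/-- `v * L` is a generalized lens-cone over the generalized lens `L` with top `A` and
bottom `B`: the bottom is smooth and strictly convex, while the top is only required to
be the boundary of the cone (minus the vertex). -/
def IsGenLensCone (v : Vn n) (L A B : Set (Vn n)) : Prop :=
  IsPCDom L ∧ v ∉ closure L ∧ IsPCSub (joinPt v L) ∧
  BdS L = A ∪ B ∧ Disjoint A B ∧
  IsBoundaryCell L B (n - 1) ∧
  A = BdS (joinPt v L) ∩ BdS L ∧
  ∀ x ∈ joinPt v L, x ≠ v → ∃! y : Vn n, y ∈ B ∧ y ∈ greatRay v x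

/- ### pseudo-ends -/

/-- `N` is a (radial) p-end neighborhood of the p-end with vertex `v`. -/
def IsPEndNbhd (ΓE : Subgroup (GLn n)) (Om : Set (Vn n)) (v : Vn n) (N : Set (Vn n)) : Prop :=
  N ⊆ Om ∧ IsOpenInS N ∧ N.Nonempty ∧
  (∀ g ∈ ΓE, sphAct g '' N = N) ∧
  (∀ x ∈ N, sphSegOpen v x ⊆ N) ∧
  dirSet N v = dirSet Om v

/-- a properly convex radial pseudo-end (p-R-end) of `Om` with p-end vertex `v`,
p-end fundamental group `ΓE` and p-end neighborhood `N`. -/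
structure IsPREnd (Γ ΓE : Subgroup (GLn n)) (Om : Set (Vn n)) (v : Vn n) (N : Set (Vn n)) :
    Prop where
  v_sph : v ∈ Sph n
  v_bd : v ∈ BdS Om
  sub : ΓE ≤ Γ
  stab : ∀ g ∈ Γ, (sphAct g v = v ↔ g ∈ ΓE)
  nbhd : IsPEndNbhd ΓE Om v N
  dir_pc : IsPCSub (dirSet Om v)
  dir_open : IsOpenInLink v (dirSet Om v)
  dir_ne : (dirSet Om v).Nonempty
  dir_pd : ProperlyDiscA (lnkAct v) ΓE (dirSet Om v)
  dir_cc : CocompactA (lnkAct v) ΓE (dirSet Om v)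

/-- a totally geodesic pseudo-end (p-T-end) of `Om`, with ideal boundary `SE` contained in
the hyperplane `w^⊥`, p-end fundamental group `ΓE` and one-sided p-end neighborhood `U`. -/
structure IsPTEnd (Γ ΓE : Subgroup (GLn n)) (Om : Set (Vn n)) (w : Vn n) (SE U : Set (Vn n)) :
    Prop where
  w_sph : w ∈ Sph n
  SE_sub : SE ⊆ linkSph w
  SE_bd : SE ⊆ BdS Om
  SE_pc : IsPCSub SE
  SE_ne : SE.Nonempty
  SE_open : IsOpenInLink w SE
  sub : ΓE ≤ Γ
  inv : ∀ g ∈ ΓE, sphAct g '' SE = SE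
  pd : ProperlyDiscA sphAct ΓE SE
  cc : CocompactA sphAct ΓE SE
  comp : ∃ x : Vn n, U = connectedComponentIn (Om \ {y : Vn n | (inner ℝ y w : ℝ) = 0}) x
  cl : SE ⊆ closure U

/-- the p-R-end with vertex `v` is of generalized lens type. -/
def IsGenLensTypeR (ΓE : Subgroup (GLn n)) (Om : Set (Vn n)) (v : Vn n) : Prop :=
  ∃ L A B : Set (Vn n), IsGenLensCone v L A B ∧
    (∀ g ∈ ΓE, sphAct g '' L = L) ∧
    IsPEndNbhd ΓE Om v (IntS (joinPt v L) \ {v})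

/-- the p-R-end with vertex `v` is of lens type. -/
def IsLensTypeR (ΓE : Subgroup (GLn n)) (Om : Set (Vn n)) (v : Vn n) : Prop :=
  ∃ L A B : Set (Vn n), IsLensCone v L A B ∧
    (∀ g ∈ ΓE, sphAct g '' L = L) ∧
    IsPEndNbhd ΓE Om v (IntS (joinPt v L) \ {v})

/-- the p-T-end with ideal boundary `SE ⊆ w^⊥` is of lens type: `SE` has a `ΓE`-invariant
lens neighborhood `L` (in an ambient open set), with `L/ΓE` compact, `Bd L ∩ Om` smooth and
strictly convex, and the frontier of `Bd L ∩ Om` contained in the hyperplane. -/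
def IsLensTypeT (ΓE : Subgroup (GLn n)) (Om : Set (Vn n)) (w : Vn n) (SE : Set (Vn n)) : Prop :=
  ∃ L : Set (Vn n), IsPCDom L ∧ SE ⊆ L ∧
    (∀ g ∈ ΓE, sphAct g '' L = L) ∧
    CocompactA sphAct ΓE (closure L) ∧
    (∀ p ∈ BdS L ∩ Om, UniqueSuppAt L p ∧ StrictlyConvexAt L p) ∧
    closure (BdS L ∩ Om) \ (BdS L ∩ Om) ⊆ {y : Vn n | (inner ℝ y w : ℝ) = 0}

/-- `U` is a horoball p-end neighborhood of the p-R-end with vertex `v`. -/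
def IsHoroball (ΓE : Subgroup (GLn n)) (Om : Set (Vn n)) (v : Vn n) (U : Set (Vn n)) : Prop :=
  IsPCDom U ∧ U ⊆ Om ∧ (∀ g ∈ ΓE, sphAct g '' U = U) ∧
  (∀ p ∈ BdS U ∩ Om, UniqueSuppAt U p ∧ StrictlyConvexAt U p) ∧
  closure U ∩ BdS Om = {v}

/- ### strong irreducibility and tameness -/

/-- `g` preserves the linear subspace `W`. -/
def PreservesSubmodule (g : Mat n) (W : Submodule ℝ (Vn n)) : Prop := ∀ x ∈ W, mvec g x ∈ W

/-- `Γ` is strongly irreducible: no finite-index subgroup preserves a nonzero proper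
linear subspace. -/
def IsStronglyIrreducible (Γ : Subgroup (GLn n)) : Prop :=
  ∀ Γ' : Subgroup (GLn n), Γ' ≤ Γ → (Γ'.subgroupOf Γ).index ≠ 0 →
    ∀ W : Submodule ℝ (Vn n), W ≠ ⊥ → W ≠ ⊤ →
      ¬ ∀ g ∈ Γ', PreservesSubmodule ((g : Mat n)) W

/-- `Om/Γ` is strongly tame: there is a `Γ`-invariant closed cocompact core whose
complement is the disjoint union of the `Γ`-translates of finitely many p-end
neighborhoods. -/
def IsStronglyTame (Γ : Subgroup (GLn n)) (Om : Set (Vn n)) : Prop :=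
  ∃ (Om₀ : Set (Vn n)) (m : ℕ) (Nb : Fin m → Set (Vn n)),
    Om₀ ⊆ Om ∧ Om ∩ closure Om₀ ⊆ Om₀ ∧
    (∀ g ∈ Γ, sphAct g '' Om₀ = Om₀) ∧
    CocompactA sphAct Γ Om₀ ∧
    (∀ j, Nb j ⊆ Om \ Om₀) ∧
    (Om \ Om₀ = ⋃ j, ⋃ g ∈ Γ, sphAct g '' Nb j) ∧
    (∀ j j', ∀ g ∈ Γ, ∀ g' ∈ Γ,
      (sphAct g '' Nb j ∩ sphAct g' '' Nb j').Nonempty →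
        sphAct g '' Nb j = sphAct g' '' Nb j')

/- ### duality -/

/-- the dual domain of `A ⊆ S^n` inside the dual sphere (identified with `S^n` via the
inner product): the unit functionals strictly positive on `clo (cone A) ∖ {0}`. -/
def dualDom (A : Set (Vn n)) : Set (Vn n) :=
  {φ | φ ∈ Sph n ∧ ∀ x ∈ closure (rayCone A), x ≠ 0 → 0 < (inner ℝ φ x : ℝ)}

/-- the dual domain, inside the link sphere of `v`, of a set `A` of directions at `v`. -/
def dualLink (v : Vn n) (A : Set (Vn n)) : Set (Vn n) :=
  {φ | φ ∈ linkSph v ∧ ∀ x ∈ closure (rayCone A), x ≠ 0 → 0 < (inner ℝ φ x : ℝ)}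

/-- the dual (inverse transpose) of a group element, acting on the dual sphere. -/
def dualM (g : GLn n) : Mat n := (((g⁻¹ : GLn n) : Mat n))ᵀ

/- ### affine actions -/

/-- the affine chart `A^n` determined by the unit vector `w`. -/
def chartOf (w : Vn n) : Set (Vn n) := {x | x ∈ Sph n ∧ 0 < (inner ℝ x w : ℝ)}

/-- the (oriented) hyperplane with unit normal `φ` supports `U` at the point `x`. -/
def SuppHalf (U : Set (Vn n)) (φ x : Vn n) : Prop :=
  φ ∈ Sph n ∧ (inner ℝ φ x : ℝ) = 0 ∧ ∀ y ∈ U, 0 ≤ (inner ℝ φ y : ℝ)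

/-- the affine action of `Γ` (preserving the chart of `w`) is asymptotically nice with the
properly convex domain `U'` and the compact invariant family `J` of supporting
hyperplanes. -/
def AsympNiceWith (Γ : Subgroup (GLn n)) (w : Vn n) (Om U' J : Set (Vn n)) : Prop :=
  IsPCDom U' ∧ U' ⊆ chartOf w ∧ (∀ g ∈ Γ, sphAct g '' U' = U') ∧
  BdS U' ∩ linkSph w ⊆ closure Om ∧
  J.Nonempty ∧ IsCompact J ∧
  (∀ φ ∈ J, φ ≠ w ∧ φ ≠ -w ∧ ∃ x ∈ BdLink w Om, SuppHalf U' φ x) ∧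
  (∀ g ∈ Γ, pact (dualM g) '' J = J) ∧
  (∀ ψ : Vn n, ψ ∈ linkSph w → (∀ y ∈ Om, 0 ≤ (inner ℝ ψ y : ℝ)) →
    (∃ x ∈ closure Om, (inner ℝ ψ x : ℝ) = 0) →
      ∃ φ ∈ J, ∀ z : Vn n, (inner ℝ z w : ℝ) = 0 → (inner ℝ z ψ : ℝ) = 0 → (inner ℝ z φ : ℝ) = 0)

/-- asymptotically nice affine action. -/
def AsympNice (Γ : Subgroup (GLn n)) (w : Vn n) (Om : Set (Vn n)) : Prop :=
  ∃ U' J : Set (Vn n), AsympNiceWith Γ w Om U' J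

end CEnds

namespace CEnds

open RealInnerProductSpace

variable {n : ℕ}

/- basic nrm facts -/
lemma nrm_of_unit {v : Vn n} (h : ‖v‖ = 1) : nrm v = v := by simp [nrm, h]

lemma norm_nrm {v : Vn n} (h : v ≠ 0) : ‖nrm v‖ = 1 := by
  have h' : ‖v‖ ≠ 0 := norm_ne_zero_iff.mpr h
  simp [nrm, norm_smul, abs_of_nonneg (inv_nonneg.mpr (norm_nonneg v)), inv_mul_cancel₀ h']

lemma nrm_smul_pos {c : ℝ} (hc : 0 < c) (v : Vn n) : nrm (c • v) = nrm v := by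
  rcases eq_or_ne v 0 with rfl | hv
  · simp [nrm]
  · have h' : ‖v‖ ≠ 0 := norm_ne_zero_iff.mpr hv
    have hc' : c ≠ 0 := ne_of_gt hc
    rw [nrm, nrm, norm_smul, smul_smul, Real.norm_eq_abs, abs_of_pos hc]
    congr 1
    field_simp

lemma smul_nrm {v : Vn n} (h : v ≠ 0) : ‖v‖ • nrm v = v := by
  have h' : ‖v‖ ≠ 0 := norm_ne_zero_iff.mpr h
  simp [nrm, smul_smul, mul_inv_cancel₀ h']

lemma continuousAt_nrm {v : Vn n} (h : v ≠ 0) : ContinuousAt nrm v := by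
  have h' : ‖v‖ ≠ 0 := norm_ne_zero_iff.mpr h
  exact (continuous_norm.continuousAt.inv₀ h').smul continuousAt_id

/- mvec facts -/
def mvecL (M : Mat n) : Vn n →ₗ[ℝ] Vn n where
  toFun := mvec M
  map_add' x y := by
    ext i
    show M.mulVec (fun j => x j + y j) i = M.mulVec (fun j => x j) i + M.mulVec (fun j => y j) i
    rw [show (fun j => x j + y j) = (fun j => x j) + (fun j => y j) from rfl, Matrix.mulVec_add]
    rfl
  map_smul' c x := by
    ext i
    show M.mulVec (fun j => c * x j) i = c * M.mulVec (fun j => x j) i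
    rw [show (fun j => c * x j) = c • (fun j => x j) from rfl, Matrix.mulVec_smul]
    rfl

lemma mvec_eq (M : Mat n) (x : Vn n) : mvec M x = mvecL M x := rfl

lemma mvec_add (M : Mat n) (x y : Vn n) : mvec M (x + y) = mvec M x + mvec M y :=
  (mvecL M).map_add x y

lemma mvec_smul (M : Mat n) (c : ℝ) (x : Vn n) : mvec M (c • x) = c • mvec M x :=
  (mvecL M).map_smul c x

lemma mvec_zero (M : Mat n) : mvec M 0 = 0 := (mvecL M).map_zero

lemma continuous_mvec (M : Mat n) : Continuous (mvec M) :=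
  (mvecL M).continuous_of_finiteDimensional

lemma mvec_mvec (A B : Mat n) (x : Vn n) : mvec A (mvec B x) = mvec (A * B) x := by
  simp only [mvec]
  ext i
  exact congrFun (Matrix.mulVec_mulVec _ A B) i

lemma mvec_one (x : Vn n) : mvec 1 x = x := by
  simp only [mvec]; ext i; simp

lemma inner_mvec (M : Mat n) (x y : Vn n) : ⟪mvec M x, y⟫ = ⟪x, mvec Mᵀ y⟫ := by
  simp only [PiLp.inner_apply, RCLike.inner_apply, conj_trivial]
  show ∑ i, y i * (M.mulVec x) i = ∑ i, (Mᵀ.mulVec y) i * x i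
  rw [Matrix.mulVec_transpose]
  simp only [Matrix.mulVec, Matrix.vecMul, dotProduct, Finset.sum_mul, Finset.mul_sum]
  rw [Finset.sum_comm]
  exact Finset.sum_congr rfl fun i _ => Finset.sum_congr rfl fun j _ => by ring

lemma GL_inv_mul (g : GLn n) : ((g⁻¹ : GLn n) : Mat n) * ((g : GLn n) : Mat n) = 1 := by
  exact_mod_cast g.inv_mul

lemma GL_mul_inv (g : GLn n) : ((g : GLn n) : Mat n) * ((g⁻¹ : GLn n) : Mat n) = 1 := by
  exact_mod_cast g.mul_inv

lemma mvec_inv_mvec (g : GLn n) (x : Vn n) : mvec ((g⁻¹ : GLn n) : Mat n) (mvec (g : Mat n) x) = x := by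
  rw [mvec_mvec, GL_inv_mul, mvec_one]

lemma mvec_ne_zero (g : GLn n) {x : Vn n} (hx : x ≠ 0) : mvec (g : Mat n) x ≠ 0 := by
  intro h
  apply hx
  rw [← mvec_inv_mvec g x, h, mvec_zero]


section OmFacts
variable {w : Vn n} {Om : Set (Vn n)}

lemma closure_unit (hOsub : Om ⊆ linkSph w) : ∀ u ∈ closure Om, ‖u‖ = 1 := fun u hu =>
  closure_minimal (fun v hv => (hOsub hv).1)
    (isClosed_eq continuous_norm continuous_const) hu

lemma closure_perp (hOsub : Om ⊆ linkSph w) : ∀ u ∈ closure Om, ⟪u, w⟫ = 0 := fun u hu =>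
  closure_minimal (fun v hv => (hOsub hv).2)
    (isClosed_eq (continuous_id.inner continuous_const) continuous_const) hu

lemma closure_ne_zero (hOsub : Om ⊆ linkSph w) : ∀ u ∈ closure Om, u ≠ 0 := fun u hu h0 => by
  have := closure_unit hOsub u hu; rw [h0] at this; simp at this

lemma cone_closure_perp (hOsub : Om ⊆ linkSph w) :
    ∀ x ∈ closure (rayCone Om), ⟪x, w⟫ = 0 := fun x hx =>
  closure_minimal (fun z hz => by
      obtain ⟨v, hv, c, hc, rfl⟩ := hz
      show (inner ℝ (c • v) w : ℝ) = 0
      rw [real_inner_smul_left, (hOsub hv).2, mul_zero])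
    (isClosed_eq (continuous_id.inner continuous_const) continuous_const) hx

lemma closure_sub_cone_closure : closure Om ⊆ closure (rayCone Om) :=
  closure_mono (fun u hu => ⟨u, hu, 1, one_pos, (one_smul _ _).symm⟩)

lemma nrm_mem_of_cone (hOsub : Om ⊆ linkSph w) {x : Vn n}
    (hx : x ∈ closure (rayCone Om)) (hx0 : x ≠ 0) : nrm x ∈ closure Om := by
  have h1 : nrm x ∈ closure (nrm '' rayCone Om) :=
    (continuousAt_nrm hx0).continuousWithinAt.mem_closure_image hx
  refine closure_mono ?_ h1
  rintro z ⟨y, ⟨v, hv, c, hc, rfl⟩, rfl⟩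
  rw [nrm_smul_pos hc, nrm_of_unit (hOsub hv).1]
  exact hv

lemma dual_cond_iff (hOsub : Om ⊆ linkSph w) (φ : Vn n) :
    (∀ x ∈ closure (rayCone Om), x ≠ 0 → 0 < ⟪φ, x⟫) ↔ ∀ u ∈ closure Om, 0 < ⟪φ, u⟫ := by
  constructor
  · intro h u hu
    exact h u (closure_sub_cone_closure hu) (closure_ne_zero hOsub u hu)
  · intro h x hx hx0
    have h1 : nrm x ∈ closure Om := nrm_mem_of_cone hOsub hx hx0
    have h2 : x = ‖x‖ • nrm x := (smul_nrm hx0).symm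
    rw [h2, real_inner_smul_right]
    exact mul_pos (norm_pos_iff.mpr hx0) (h (nrm x) h1)

lemma rayCone_dualLink (hOsub : Om ⊆ linkSph w) (hOne : Om.Nonempty) :
    rayCone (dualLink w Om) =
      {z : Vn n | ⟪z, w⟫ = 0 ∧ ∀ u ∈ closure Om, 0 < ⟪z, u⟫} := by
  obtain ⟨u₀, hu₀⟩ := hOne
  ext z
  constructor
  · rintro ⟨φ, ⟨⟨hφn, hφw⟩, hφpos⟩, c, hc, rfl⟩
    have hpos := (dual_cond_iff hOsub φ).1 hφpos
    refine ⟨by rw [real_inner_smul_left, hφw, mul_zero], fun u hu => ?_⟩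
    rw [real_inner_smul_left]
    exact mul_pos hc (hpos u hu)
  · rintro ⟨hzw, hzpos⟩
    have hz0 : z ≠ 0 := by
      intro h
      have := hzpos u₀ (subset_closure hu₀)
      rw [h, inner_zero_left] at this
      exact lt_irrefl 0 this
    have hn : ‖z‖ ≠ 0 := norm_ne_zero_iff.mpr hz0
    refine ⟨nrm z, ⟨⟨norm_nrm hz0, ?_⟩, ?_⟩, ‖z‖, norm_pos_iff.mpr hz0, (smul_nrm hz0).symm⟩
    · show ⟪nrm z, w⟫ = 0
      rw [nrm, real_inner_smul_left, hzw, mul_zero]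
    · refine (dual_cond_iff hOsub (nrm z)).2 fun u hu => ?_
      rw [nrm, real_inner_smul_left]
      exact mul_pos (inv_pos.mpr (norm_pos_iff.mpr hz0)) (hzpos u hu)

lemma convex_insert_dual :
    Convex ℝ (insert (0 : Vn n)
      {z : Vn n | ⟪z, w⟫ = 0 ∧ ∀ u ∈ closure Om, 0 < ⟪z, u⟫}) := by
  set D := {z : Vn n | ⟪z, w⟫ = 0 ∧ ∀ u ∈ closure Om, 0 < ⟪z, u⟫} with hD
  have hsmul : ∀ (a : ℝ) (z : Vn n), 0 ≤ a → z ∈ insert 0 D → a • z ∈ insert 0 D := by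
    intro a z ha hz
    rcases eq_or_lt_of_le ha with rfl | ha'
    · simp
    rcases hz with rfl | hz
    · simp
    · refine Or.inr ⟨by rw [real_inner_smul_left, hz.1, mul_zero], fun u hu => ?_⟩
      rw [real_inner_smul_left]
      exact mul_pos ha' (hz.2 u hu)
  have hadd : ∀ z₁ z₂ : Vn n, z₁ ∈ insert 0 D → z₂ ∈ insert 0 D → z₁ + z₂ ∈ insert 0 D := by
    rintro z₁ z₂ (rfl | h₁) h₂
    · simpa using h₂
    rcases h₂ with rfl | h₂
    · simpa using Or.inr h₁
    · refine Or.inr ⟨by rw [inner_add_left, h₁.1, h₂.1, add_zero], fun u hu => ?_⟩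
      rw [inner_add_left]
      exact add_pos (h₁.2 u hu) (h₂.2 u hu)
  intro x hx y hy a b ha hb _
  exact hadd _ _ (hsmul a x ha hx) (hsmul b y hb hy)

lemma exists_small_t {U : Set (Vn n)} (hU : IsOpen U) {u₀ : Vn n} (h1 : ‖u₀‖ = 1)
    (hmem : u₀ ∈ U) (q : Vn n) : ∃ t : ℝ, 0 < t ∧ nrm (u₀ + t • q) ∈ U := by
  have h0 : u₀ ≠ 0 := by intro h; rw [h] at h1; simp at h1
  have hG : Continuous fun t : ℝ => u₀ + t • q := by continuity
  have hF : ContinuousAt (nrm ∘ fun t : ℝ => u₀ + t • q) 0 := by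
    apply ContinuousAt.comp
    · simpa using continuousAt_nrm h0
    · exact hG.continuousAt
  have hF0 : (nrm ∘ fun t : ℝ => u₀ + t • q) 0 ∈ U := by
    simp only [Function.comp_apply, zero_smul, add_zero, nrm_of_unit h1]; exact hmem
  have hev : ∀ᶠ t : ℝ in nhds 0, nrm (u₀ + t • q) ∈ U :=
    hF.eventually_mem (hU.mem_nhds hF0)
  obtain ⟨ε, hε, hb⟩ := Metric.eventually_nhds_iff.1 hev
  refine ⟨ε / 2, half_pos hε, hb ?_⟩
  rw [Real.dist_eq, sub_zero, abs_of_pos (half_pos hε)]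
  exact half_lt_self hε

lemma pos_on_closure_dualLink (hw : ‖w‖ = 1) (hOsub : Om ⊆ linkSph w)
    (hOopen : IsOpenInLink w Om) {u₀ : Vn n} (hu₀ : u₀ ∈ Om) :
    ∀ φ ∈ closure (dualLink w Om), 0 < ⟪u₀, φ⟫ := by
  intro φ hφ
  have h1 : ∀ u ∈ closure Om, 0 ≤ ⟪φ, u⟫ := by
    have hset : {ψ : Vn n | ∀ u ∈ closure Om, 0 ≤ ⟪ψ, u⟫} =
        ⋂ u ∈ closure Om, {ψ : Vn n | 0 ≤ ⟪ψ, u⟫} := by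
      ext ψ; simp
    have hcl : IsClosed {ψ : Vn n | ∀ u ∈ closure Om, 0 ≤ ⟪ψ, u⟫} := by
      rw [hset]
      exact isClosed_biInter fun u _ =>
        isClosed_le continuous_const (continuous_id.inner continuous_const)
    exact closure_minimal
      (fun ψ hψ u hu => le_of_lt ((dual_cond_iff hOsub ψ).1 hψ.2 u hu)) hcl hφ
  have h2 : ⟪φ, w⟫ = 0 := closure_minimal (fun ψ hψ => hψ.1.2)
    (isClosed_eq (continuous_id.inner continuous_const) continuous_const) hφ
  have h3 : ‖φ‖ = 1 := closure_minimal (fun ψ hψ => hψ.1.1)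
    (isClosed_eq continuous_norm continuous_const) hφ
  have hge : 0 ≤ ⟪φ, u₀⟫ := h1 u₀ (subset_closure hu₀)
  rcases lt_or_eq_of_le hge with hlt | heq
  · rw [real_inner_comm]; exact hlt
  · exfalso
    obtain ⟨U, hU, hOeq⟩ := hOopen
    have hu₀U : u₀ ∈ U := by rw [hOeq] at hu₀; exact hu₀.1
    have h1n : ‖u₀‖ = 1 := (hOsub hu₀).1
    obtain ⟨t, ht, htU⟩ := exists_small_t hU h1n hu₀U (-φ)
    set z := u₀ + t • (-φ) with hz
    have huu : ⟪u₀, u₀⟫ = 1 := by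
      rw [real_inner_self_eq_norm_mul_norm, h1n, mul_one]
    have hφu : ⟪φ, u₀⟫ = 0 := heq.symm
    have hzu : ⟪z, u₀⟫ = 1 := by
      rw [hz, inner_add_left, real_inner_smul_left, inner_neg_left, huu, hφu]
      ring
    have hz0 : z ≠ 0 := by
      intro h; rw [h, inner_zero_left] at hzu; exact one_ne_zero hzu.symm
    have hlink : nrm z ∈ linkSph w := by
      refine ⟨norm_nrm hz0, ?_⟩
      show ⟪nrm z, w⟫ = 0
      have hzw : ⟪z, w⟫ = 0 := by
        rw [hz, inner_add_left, real_inner_smul_left, inner_neg_left, (hOsub hu₀).2, h2]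
        ring
      rw [nrm, real_inner_smul_left, hzw, mul_zero]
    have hmemOm : nrm z ∈ Om := by rw [hOeq]; exact ⟨htU, hlink⟩
    have hge2 := h1 (nrm z) (subset_closure hmemOm)
    have hφφ : ⟪φ, φ⟫ = 1 := by
      rw [real_inner_self_eq_norm_mul_norm, h3, mul_one]
    have hcalc : ⟪φ, nrm z⟫ = ‖z‖⁻¹ * (-t) := by
      rw [nrm, real_inner_smul_right]
      congr 1
      rw [hz, inner_add_right, real_inner_smul_right, inner_neg_right, hφu, hφφ]
      ring
    rw [hcalc] at hge2
    have : 0 < ‖z‖⁻¹ := inv_pos.mpr (norm_pos_iff.mpr hz0)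
    nlinarith

lemma dualLink_nonempty (hw : ‖w‖ = 1) (hOsub : Om ⊆ linkSph w) (hOpc : IsPCSub Om)
    (hOne : Om.Nonempty) : (dualLink w Om).Nonempty := by
  obtain ⟨u₀, hu₀⟩ := hOne
  obtain ⟨-, -, f, hf⟩ := hOpc
  set y := (InnerProductSpace.toDual ℝ (Vn n)).symm (LinearMap.toContinuousLinearMap f) with hy
  have hyx : ∀ x : Vn n, ⟪y, x⟫ = f x := fun x => by
    rw [hy]; simp [InnerProductSpace.toDual_symm_apply]
  set z := y - (⟪y, w⟫ : ℝ) • w with hz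
  have hzw : ⟪z, w⟫ = 0 := by
    rw [hz, inner_sub_left, real_inner_smul_left, real_inner_self_eq_norm_mul_norm, hw]
    ring
  have hzu : ∀ u ∈ closure Om, ⟪z, u⟫ = f u := by
    intro u hu
    have hwu : ⟪w, u⟫ = 0 := by rw [real_inner_comm]; exact closure_perp hOsub u hu
    rw [hz, inner_sub_left, real_inner_smul_left, hwu, hyx]
    ring
  have hz0 : z ≠ 0 := by
    intro h
    have h' := hzu u₀ (subset_closure hu₀)
    rw [h, inner_zero_left] at h'
    have := hf u₀ (subset_closure hu₀)
    linarith
  refine ⟨nrm z, ⟨norm_nrm hz0, ?_⟩, ?_⟩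
  · show ⟪nrm z, w⟫ = 0
    rw [nrm, real_inner_smul_left, hzw, mul_zero]
  · refine (dual_cond_iff hOsub _).2 fun u hu => ?_
    show (0:ℝ) < ⟪nrm z, u⟫
    rw [nrm, real_inner_smul_left, hzu u hu]
    exact mul_pos (inv_pos.mpr (norm_pos_iff.mpr hz0)) (hf u hu)

lemma isOpen_dual_pos (hOsub : Om ⊆ linkSph w) :
    IsOpen {φ : Vn n | ∀ u ∈ closure Om, 0 < ⟪φ, u⟫} := by
  rw [Metric.isOpen_iff]
  intro φ₀ hφ₀
  rcases (closure Om).eq_empty_or_nonempty with he | hne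
  · exact ⟨1, one_pos, fun ψ _ u hu => by rw [he] at hu; exact absurd hu (notMem_empty u)⟩
  · have hb : Bornology.IsBounded (closure Om) :=
      isBounded_iff_forall_norm_le.2 ⟨1, fun u hu => le_of_eq (closure_unit hOsub u hu)⟩
    have hK : IsCompact (closure Om) :=
      Metric.isCompact_of_isClosed_isBounded isClosed_closure hb
    have hc : ContinuousOn (fun u : Vn n => (⟪φ₀, u⟫ : ℝ)) (closure Om) :=
      (continuous_const.inner continuous_id).continuousOn
    obtain ⟨u₁, hu₁, hmin⟩ := hK.exists_isMinOn hne hc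
    have hm : 0 < ⟪φ₀, u₁⟫ := hφ₀ u₁ hu₁
    refine ⟨⟪φ₀, u₁⟫, hm, fun ψ hψ u hu => ?_⟩
    have hle : (⟪φ₀, u₁⟫ : ℝ) ≤ ⟪φ₀, u⟫ := hmin hu
    have hdist : ‖ψ - φ₀‖ < ⟪φ₀, u₁⟫ := by
      rw [← dist_eq_norm]; exact hψ
    have habs : |⟪ψ - φ₀, u⟫| ≤ ‖ψ - φ₀‖ * ‖u‖ := abs_real_inner_le_norm _ _
    rw [closure_unit hOsub u hu, mul_one] at habs
    have hsub : (⟪ψ - φ₀, u⟫ : ℝ) = ⟪ψ, u⟫ - ⟪φ₀, u⟫ := by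
      rw [inner_sub_left]
    have h1 := (abs_le.1 habs).1
    rw [hsub] at h1
    linarith

lemma isOpenInLink_dualLink (hOsub : Om ⊆ linkSph w) : IsOpenInLink w (dualLink w Om) := by
  refine ⟨{φ : Vn n | ∀ u ∈ closure Om, 0 < ⟪φ, u⟫}, isOpen_dual_pos hOsub, ?_⟩
  ext φ
  constructor
  · rintro ⟨hl, hp⟩; exact ⟨(dual_cond_iff hOsub φ).1 hp, hl⟩
  · rintro ⟨hp, hl⟩; exact ⟨hl, (dual_cond_iff hOsub φ).2 hp⟩

lemma isPCSub_dualLink (hw : ‖w‖ = 1) (hOsub : Om ⊆ linkSph w)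
    (hOopen : IsOpenInLink w Om) (hOne : Om.Nonempty) : IsPCSub (dualLink w Om) := by
  refine ⟨fun φ hφ => hφ.1.1, ?_, ?_⟩
  · rw [rayCone_dualLink hOsub hOne]
    exact convex_insert_dual
  · obtain ⟨u₀, hu₀⟩ := hOne
    refine ⟨innerₛₗ ℝ u₀, fun φ hφ => ?_⟩
    have := pos_on_closure_dualLink hw hOsub hOopen hu₀ φ hφ
    simpa using this

/- perp algebra -/
lemma inner_perp_w (hw : ‖w‖ = 1) (x : Vn n) : ⟪perp w x, w⟫ = 0 := by
  rw [perp, inner_sub_left, real_inner_smul_left, real_inner_self_eq_norm_mul_norm, hw]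
  ring

lemma inner_perp_of_perp {u : Vn n} (hu : ⟪w, u⟫ = 0) (x : Vn n) :
    ⟪perp w x, u⟫ = ⟪x, u⟫ := by
  rw [perp, inner_sub_left, real_inner_smul_left, hu]; ring

lemma perp_smul (c : ℝ) (x : Vn n) : perp w (c • x) = c • perp w x := by
  rw [perp, perp, real_inner_smul_left, smul_sub, smul_smul]

lemma perp_add (x y : Vn n) : perp w (x + y) = perp w x + perp w y := by
  rw [perp, perp, perp, inner_add_left, add_smul]; abel

lemma perp_self (hw : ‖w‖ = 1) : perp w w = 0 := by
  rw [perp, real_inner_self_eq_norm_mul_norm, hw]; simp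

lemma norm_combo (hw : ‖w‖ = 1) {u : Vn n} (hun : ‖u‖ = 1) (huw : ⟪u, w⟫ = 0)
    (a b : ℝ) : ‖a • w + b • u‖^2 = a^2 + b^2 := by
  rw [norm_add_sq_real, norm_smul, norm_smul, real_inner_smul_left, real_inner_smul_right,
    show (inner ℝ w u : ℝ) = 0 by rw [real_inner_comm]; exact huw]
  simp only [Real.norm_eq_abs, hw, hun, mul_one, mul_zero]
  rw [sq_abs, sq_abs]
  ring

lemma norm_eq_one_of_sq {x : Vn n} (h : ‖x‖^2 = 1) : ‖x‖ = 1 := by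
  rw [← Real.sqrt_sq (norm_nonneg x), h, Real.sqrt_one]

lemma dirSet_tubeCore (hw : ‖w‖ = 1) {Sg : Set (Vn n)} (hSg : Sg ⊆ linkSph w) :
    dirSet (tubeCore w Sg) w = Sg := by
  have hww : ⟪w, w⟫ = 1 := by rw [real_inner_self_eq_norm_mul_norm, hw, mul_one]
  ext u
  constructor
  · rintro ⟨hul, t, ht0, htπ, hseg⟩
    obtain ⟨u', hu', t', ht'0, ht'π, heq⟩ := hseg (t/2) (half_pos ht0) (half_lt_self ht0)
    have h1 : Real.cos (t/2) = Real.cos t' := by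
      have h := congrArg (fun x : Vn n => (⟪x, w⟫ : ℝ)) heq
      simp only [inner_add_left, real_inner_smul_left] at h
      rw [hww, hul.2, (hSg hu').2] at h
      linarith
    have h2 : t/2 = t' :=
      Real.injOn_cos ⟨(half_pos ht0).le, by linarith⟩ ⟨ht'0.le, ht'π.le⟩ h1
    rw [← h2] at heq
    have hsin : Real.sin (t/2) ≠ 0 :=
      (Real.sin_pos_of_pos_of_lt_pi (half_pos ht0) (by linarith)).ne'
    have h3 : u = u' := smul_right_injective (Vn n) hsin (add_left_cancel heq)
    rw [h3]; exact hu'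
  · intro hu
    refine ⟨hSg hu, Real.pi/2, half_pos Real.pi_pos, half_lt_self Real.pi_pos,
      fun s hs0 hs2 => ?_⟩
    exact ⟨u, hu, s, hs0, lt_trans hs2 (half_lt_self Real.pi_pos), rfl⟩

lemma mem_tubeCore_iff (hw : ‖w‖ = 1) {Sg : Set (Vn n)} (hSg : Sg ⊆ linkSph w) (x : Vn n) :
    x ∈ tubeCore w Sg ↔ ‖x‖ = 1 ∧ perp w x ∈ rayCone Sg := by
  have hww : ⟪w, w⟫ = 1 := by rw [real_inner_self_eq_norm_mul_norm, hw, mul_one]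
  constructor
  · rintro ⟨u, hu, t, ht0, htπ, rfl⟩
    have huw : ⟪u, w⟫ = 0 := (hSg hu).2
    have hun : ‖u‖ = 1 := (hSg hu).1
    have hxw : ⟪Real.cos t • w + Real.sin t • u, w⟫ = Real.cos t := by
      rw [inner_add_left, real_inner_smul_left, real_inner_smul_left, hww, huw]; ring
    refine ⟨norm_eq_one_of_sq ?_, ?_⟩
    · rw [norm_combo hw hun huw, Real.cos_sq_add_sin_sq]
    · have hp : perp w (Real.cos t • w + Real.sin t • u) = Real.sin t • u := by
        rw [perp, hxw, add_sub_cancel_left]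
      exact ⟨u, hu, Real.sin t, Real.sin_pos_of_pos_of_lt_pi ht0 htπ, hp⟩
  · rintro ⟨hx1, u, hu, c, hc, hperp⟩
    have huw : ⟪u, w⟫ = 0 := (hSg hu).2
    have hun : ‖u‖ = 1 := (hSg hu).1
    have hxdec : x = (⟪x, w⟫ : ℝ) • w + c • u := by
      rw [← hperp, perp]; abel
    have hsum : (⟪x, w⟫ : ℝ)^2 + c^2 = 1 := by
      have h := norm_combo hw hun huw (⟪x, w⟫ : ℝ) c
      rw [← hxdec, hx1, one_pow] at h
      linarith
    have ha2 : (⟪x, w⟫ : ℝ)^2 < 1 := by nlinarith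
    have hlt : (⟪x, w⟫ : ℝ) < 1 := by nlinarith
    have hgt : -1 < (⟪x, w⟫ : ℝ) := by nlinarith
    refine ⟨u, hu, Real.arccos ⟪x, w⟫, Real.arccos_pos.2 hlt, (by
      rw [Real.arccos_eq_pi_div_two_sub_arcsin]
      have := Real.neg_pi_div_two_lt_arcsin.2 hgt
      linarith), ?_⟩
    rw [Real.cos_arccos hgt.le hlt.le, Real.sin_arccos]
    have h12 : 1 - (⟪x, w⟫ : ℝ)^2 = c^2 := by linarith
    rw [h12, Real.sqrt_sq hc.le, ← hxdec]

lemma perp_decomp (x : Vn n) : x = perp w x + (⟪x, w⟫ : ℝ) • w := by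
  rw [perp]; abel

/- invariance machinery -/
lemma span_perp (hOsub : Om ⊆ linkSph w) (hOopen : IsOpenInLink w Om) (hOne : Om.Nonempty) :
    ∀ x : Vn n, ⟪x, w⟫ = 0 → x ∈ Submodule.span ℝ Om := by
  intro x hxw
  obtain ⟨u₀, hu₀⟩ := hOne
  obtain ⟨U, hU, hOeq⟩ := hOopen
  have h1n : ‖u₀‖ = 1 := (hOsub hu₀).1
  have huu : ⟪u₀, u₀⟫ = 1 := by rw [real_inner_self_eq_norm_mul_norm, h1n, mul_one]
  set q := x - (⟪x, u₀⟫ : ℝ) • u₀ with hq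
  have hqu : ⟪q, u₀⟫ = 0 := by
    rw [hq, inner_sub_left, real_inner_smul_left, huu]; ring
  have hqw : ⟪q, w⟫ = 0 := by
    rw [hq, inner_sub_left, real_inner_smul_left, (hOsub hu₀).2, hxw]; ring
  have hu₀U : u₀ ∈ U := by rw [hOeq] at hu₀; exact hu₀.1
  obtain ⟨t, ht, htU⟩ := exists_small_t hU h1n hu₀U q
  set z := u₀ + t • q with hz
  have hzu : ⟪z, u₀⟫ = 1 := by
    rw [hz, inner_add_left, real_inner_smul_left, huu, hqu]; ring
  have hz0 : z ≠ 0 := by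
    intro h; rw [h, inner_zero_left] at hzu; exact one_ne_zero hzu.symm
  have hlink : nrm z ∈ linkSph w := by
    refine ⟨norm_nrm hz0, ?_⟩
    show ⟪nrm z, w⟫ = 0
    have : ⟪z, w⟫ = 0 := by
      rw [hz, inner_add_left, real_inner_smul_left, (hOsub hu₀).2, hqw]; ring
    rw [nrm, real_inner_smul_left, this, mul_zero]
  have hOmem : nrm z ∈ Om := by rw [hOeq]; exact ⟨htU, hlink⟩
  have hu₀s : u₀ ∈ Submodule.span ℝ Om := Submodule.subset_span hu₀
  have hzs : z ∈ Submodule.span ℝ Om := by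
    have h1 : nrm z ∈ Submodule.span ℝ Om := Submodule.subset_span hOmem
    have h2 := Submodule.smul_mem (Submodule.span ℝ Om) ‖z‖ h1
    rwa [smul_nrm hz0] at h2
  have hqs : q ∈ Submodule.span ℝ Om := by
    have h3 : t • q ∈ Submodule.span ℝ Om := by
      have := Submodule.sub_mem (Submodule.span ℝ Om) hzs hu₀s
      rwa [hz, add_sub_cancel_left] at this
    have h4 := Submodule.smul_mem (Submodule.span ℝ Om) t⁻¹ h3
    rwa [smul_smul, inv_mul_cancel₀ (ne_of_gt ht), one_smul] at h4
  have hxd : x = q + (⟪x, u₀⟫ : ℝ) • u₀ := by rw [hq]; abel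
  rw [hxd]
  exact Submodule.add_mem _ hqs (Submodule.smul_mem _ _ hu₀s)

variable {Γ : Subgroup (GLn n)}

lemma mvec_perp_w (hOsub : Om ⊆ linkSph w) (hOopen : IsOpenInLink w Om)
    (hOne : Om.Nonempty) (hinv : ∀ g ∈ Γ, sphAct g '' Om = Om) :
    ∀ g ∈ Γ, ∀ x : Vn n, ⟪x, w⟫ = 0 → ⟪mvec (g : Mat n) x, w⟫ = 0 := by
  intro g hg x hxw
  have hx := span_perp hOsub hOopen hOne x hxw
  have hsub : Om ⊆ (LinearMap.ker ((innerₛₗ ℝ w).comp (mvecL (g : Mat n))) : Set (Vn n)) := by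
    intro u hu
    simp only [SetLike.mem_coe, LinearMap.mem_ker, LinearMap.comp_apply, innerₛₗ_apply_apply]
    rw [← mvec_eq]
    have h1 : sphAct g u ∈ Om := by rw [← hinv g hg]; exact mem_image_of_mem _ hu
    have h0 : u ≠ 0 := by
      intro h; have := (hOsub hu).1; rw [h] at this; simp at this
    have hne : mvec (g : Mat n) u ≠ 0 := mvec_ne_zero g h0
    have hdec : mvec (g : Mat n) u = ‖mvec (g : Mat n) u‖ • sphAct g u := (smul_nrm hne).symm
    rw [hdec, real_inner_smul_right]
    have h2 : ⟪w, sphAct g u⟫ = 0 := by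
      rw [real_inner_comm]; exact (hOsub h1).2
    rw [h2, mul_zero]
  have hx2 := Submodule.span_le.2 hsub hx
  simp only [SetLike.mem_coe, LinearMap.mem_ker, LinearMap.comp_apply, innerₛₗ_apply_apply] at hx2
  rw [← mvec_eq] at hx2
  rw [real_inner_comm]
  exact hx2

lemma mvec_cone_closure (hOsub : Om ⊆ linkSph w) (hinv : ∀ g ∈ Γ, sphAct g '' Om = Om) :
    ∀ g ∈ Γ, ∀ x ∈ closure (rayCone Om), mvec (g : Mat n) x ∈ closure (rayCone Om) := by
  intro g hg x hx
  have hray : ∀ z ∈ rayCone Om, mvec (g : Mat n) z ∈ rayCone Om := by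
    rintro z ⟨v, hv, c, hc, rfl⟩
    have hv0 : v ≠ 0 := by
      intro h; have := (hOsub hv).1; rw [h] at this; simp at this
    have hne : mvec (g : Mat n) v ≠ 0 := mvec_ne_zero g hv0
    refine ⟨sphAct g v, by rw [← hinv g hg]; exact mem_image_of_mem _ hv,
      c * ‖mvec (g : Mat n) v‖, mul_pos hc (norm_pos_iff.mpr hne), ?_⟩
    rw [mvec_smul, mul_smul]
    congr 1
    exact (smul_nrm hne).symm
  have h1 : mvec (g : Mat n) x ∈ closure (mvec (g : Mat n) '' rayCone Om) :=
    (continuous_mvec _).continuousAt.continuousWithinAt.mem_closure_image hx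
  refine closure_mono ?_ h1
  rintro _ ⟨y, hy, rfl⟩
  exact hray y hy

/- dualM algebra -/
lemma dualM_mul_self (g : GLn n) : ((g : GLn n) : Mat n)ᵀ * dualM g = 1 := by
  rw [dualM, ← Matrix.transpose_mul, GL_inv_mul, Matrix.transpose_one]

lemma dualM_self_mul (g : GLn n) : dualM g * ((g : GLn n) : Mat n)ᵀ = 1 := by
  rw [dualM, ← Matrix.transpose_mul, GL_mul_inv, Matrix.transpose_one]

lemma mvec_dualM_cancel (g : GLn n) (z : Vn n) :
    mvec (((g : GLn n) : Mat n))ᵀ (mvec (dualM g) z) = z := by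
  rw [mvec_mvec, dualM_mul_self, mvec_one]

lemma mvec_dualM_cancel' (g : GLn n) (z : Vn n) :
    mvec (dualM g) (mvec (((g : GLn n) : Mat n))ᵀ z) = z := by
  rw [mvec_mvec, dualM_self_mul, mvec_one]

lemma mvec_dualM_ne_zero (g : GLn n) {z : Vn n} (hz : z ≠ 0) : mvec (dualM g) z ≠ 0 := by
  intro h
  apply hz
  rw [← mvec_dualM_cancel g z, h, mvec_zero]

lemma dualM_w_eigen (hw : ‖w‖ = 1) (hOsub : Om ⊆ linkSph w) (hOopen : IsOpenInLink w Om)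
    (hOne : Om.Nonempty) (hinv : ∀ g ∈ Γ, sphAct g '' Om = Om) {g : GLn n} (hg : g ∈ Γ) :
    mvec (dualM g) w = (⟪mvec (dualM g) w, w⟫ : ℝ) • w := by
  set r := perp w (mvec (dualM g) w) with hr
  have hrw : ⟪r, w⟫ = 0 := inner_perp_w hw _
  have hkey : ⟪mvec (dualM g) w, r⟫ = 0 := by
    rw [dualM, inner_mvec, Matrix.transpose_transpose]
    have h1 := mvec_perp_w hOsub hOopen hOne hinv g⁻¹ (inv_mem hg) r hrw
    rw [real_inner_comm]
    exact h1
  have hr0 : r = 0 := by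
    have h2 : (⟪r, r⟫ : ℝ) = 0 := by
      nth_rewrite 1 [hr, perp]
      rw [inner_sub_left, real_inner_smul_left, hkey]
      rw [show (⟪w, r⟫ : ℝ) = 0 by rw [real_inner_comm]; exact hrw]
      ring
    exact inner_self_eq_zero.1 h2
  have h3 : perp w (mvec (dualM g) w) = 0 := hr0
  rw [perp] at h3
  exact sub_eq_zero.1 h3

lemma perp_mvec_dualM_mem (hw : ‖w‖ = 1) (hOsub : Om ⊆ linkSph w)
    (hinv : ∀ g ∈ Γ, sphAct g '' Om = Om) {g : GLn n} (hg : g ∈ Γ) {z : Vn n}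
    (hzw : ⟪z, w⟫ = 0) (hzpos : ∀ u ∈ closure Om, 0 < ⟪z, u⟫) :
    ⟪perp w (mvec (dualM g) z), w⟫ = 0 ∧
      ∀ u ∈ closure Om, 0 < ⟪perp w (mvec (dualM g) z), u⟫ := by
  refine ⟨inner_perp_w hw _, fun u hu => ?_⟩
  have hwu : ⟪w, u⟫ = 0 := by rw [real_inner_comm]; exact closure_perp hOsub u hu
  rw [inner_perp_of_perp hwu]
  rw [dualM, inner_mvec, Matrix.transpose_transpose]
  have hmem : mvec ((g⁻¹ : GLn n) : Mat n) u ∈ closure (rayCone Om) :=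
    mvec_cone_closure hOsub hinv g⁻¹ (inv_mem hg) u (closure_sub_cone_closure hu)
  have hne : mvec ((g⁻¹ : GLn n) : Mat n) u ≠ 0 :=
    mvec_ne_zero g⁻¹ (closure_ne_zero hOsub u hu)
  exact (dual_cond_iff hOsub z).2 hzpos _ hmem hne

lemma pact_dualM_mapsto (hw : ‖w‖ = 1) (hOsub : Om ⊆ linkSph w) (hOopen : IsOpenInLink w Om)
    (hOne : Om.Nonempty) (hinv : ∀ g ∈ Γ, sphAct g '' Om = Om) {g : GLn n} (hg : g ∈ Γ) :
    ∀ x ∈ tubeCore w (dualLink w Om), pact (dualM g) x ∈ tubeCore w (dualLink w Om) := by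
  intro x hx
  have hSg : dualLink w Om ⊆ linkSph w := fun φ hφ => hφ.1
  rw [mem_tubeCore_iff hw hSg] at hx
  obtain ⟨hx1, hxp⟩ := hx
  have hDeq := rayCone_dualLink hOsub hOne
  rw [hDeq] at hxp
  have hx0 : x ≠ 0 := by intro h; rw [h] at hx1; simp at hx1
  have hy0 : mvec (dualM g) x ≠ 0 := mvec_dualM_ne_zero g hx0
  have hperp_y : ⟪perp w (mvec (dualM g) x), w⟫ = 0 ∧
      ∀ u ∈ closure Om, 0 < ⟪perp w (mvec (dualM g) x), u⟫ := by
    have hdec : mvec (dualM g) x =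
        mvec (dualM g) (perp w x) + (⟪x, w⟫ : ℝ) • mvec (dualM g) w := by
      conv_lhs => rw [perp_decomp (w := w) x]
      rw [mvec_add, mvec_smul]
    rw [hdec, perp_add, perp_smul, dualM_w_eigen hw hOsub hOopen hOne hinv hg,
      perp_smul, perp_self hw, smul_zero, smul_zero, add_zero]
    exact perp_mvec_dualM_mem hw hOsub hinv hg hxp.1 hxp.2
  rw [mem_tubeCore_iff hw hSg]
  refine ⟨norm_nrm hy0, ?_⟩
  rw [hDeq]
  have hpn : perp w (nrm (mvec (dualM g) x)) = ‖mvec (dualM g) x‖⁻¹ • perp w (mvec (dualM g) x) := by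
    rw [nrm, perp_smul]
  show perp w (nrm (mvec (dualM g) x)) ∈ _
  rw [hpn]
  refine ⟨by rw [real_inner_smul_left, hperp_y.1, mul_zero], fun u hu => ?_⟩
  rw [real_inner_smul_left]
  exact mul_pos (inv_pos.mpr (norm_pos_iff.mpr hy0)) (hperp_y.2 u hu)

lemma pact_dualM_inv_cancel (g : GLn n) {x : Vn n} (hx1 : ‖x‖ = 1) :
    pact (dualM g) (pact (dualM g⁻¹) x) = x := by
  have hx0 : x ≠ 0 := by intro h; rw [h] at hx1; simp at hx1
  have hd : dualM g⁻¹ = (((g : GLn n) : Mat n))ᵀ := by rw [dualM, inv_inv]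
  have hne : mvec (dualM g⁻¹) x ≠ 0 := mvec_dualM_ne_zero g⁻¹ hx0
  show nrm (mvec (dualM g) (nrm (mvec (dualM g⁻¹) x))) = x
  rw [show nrm (mvec (dualM g⁻¹) x) = ‖mvec (dualM g⁻¹) x‖⁻¹ • mvec (dualM g⁻¹) x from rfl,
    mvec_smul, nrm_smul_pos (inv_pos.mpr (norm_pos_iff.mpr hne)), hd,
    mvec_dualM_cancel' g x, nrm_of_unit hx1]

lemma pact_image_tubeCore (hw : ‖w‖ = 1) (hOsub : Om ⊆ linkSph w) (hOopen : IsOpenInLink w Om)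
    (hOne : Om.Nonempty) (hinv : ∀ g ∈ Γ, sphAct g '' Om = Om) {g : GLn n} (hg : g ∈ Γ) :
    pact (dualM g) '' tubeCore w (dualLink w Om) = tubeCore w (dualLink w Om) := by
  have hSg : dualLink w Om ⊆ linkSph w := fun φ hφ => hφ.1
  apply Subset.antisymm
  · rintro _ ⟨x, hx, rfl⟩
    exact pact_dualM_mapsto hw hOsub hOopen hOne hinv hg x hx
  · intro x hx
    have hx1 : ‖x‖ = 1 := ((mem_tubeCore_iff hw hSg x).1 hx).1
    exact ⟨pact (dualM g⁻¹) x,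
      pact_dualM_mapsto hw hOsub hOopen hOne hinv (inv_mem hg) x hx,
      pact_dualM_inv_cancel g hx1⟩

lemma continuousOn_pact_dualM (g : GLn n) :
    ContinuousOn (pact (dualM g)) {z : Vn n | z ≠ 0} := by
  intro z hz
  apply ContinuousAt.continuousWithinAt
  show ContinuousAt (fun v => nrm (mvec (dualM g) v)) z
  exact (continuousAt_nrm (mvec_dualM_ne_zero g hz)).comp (continuous_mvec _).continuousAt

lemma pact_image_tube (hw : ‖w‖ = 1) (hOsub : Om ⊆ linkSph w) (hOopen : IsOpenInLink w Om)
    (hOne : Om.Nonempty) (hinv : ∀ g ∈ Γ, sphAct g '' Om = Om) {g : GLn n} (hg : g ∈ Γ) :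
    pact (dualM g) '' tube w (dualLink w Om) = tube w (dualLink w Om) := by
  have hSg : dualLink w Om ⊆ linkSph w := fun φ hφ => hφ.1
  have hT1 : ∀ x ∈ closure (tubeCore w (dualLink w Om)), ‖x‖ = 1 :=
    fun x hx => closure_minimal (fun y hy => ((mem_tubeCore_iff hw hSg y).1 hy).1)
      (isClosed_eq continuous_norm continuous_const) hx
  have hcl : ∀ γ : GLn n, γ ∈ Γ →
      pact (dualM γ) '' closure (tubeCore w (dualLink w Om)) ⊆
        closure (tubeCore w (dualLink w Om)) := by
    intro γ hγ
    have hcont : ContinuousOn (pact (dualM γ)) (closure (tubeCore w (dualLink w Om))) := by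
      apply (continuousOn_pact_dualM γ).mono
      intro x hx h0
      have := hT1 x hx
      rw [h0] at this; simp at this
    refine (hcont.image_closure).trans ?_
    rw [pact_image_tubeCore hw hOsub hOopen hOne hinv hγ]
  show pact (dualM g) '' closure (tubeCore w (dualLink w Om)) =
    closure (tubeCore w (dualLink w Om))
  apply Subset.antisymm (hcl g hg)
  intro x hx
  exact ⟨pact (dualM g⁻¹) x, hcl g⁻¹ (inv_mem hg) ⟨x, hx, rfl⟩,
    pact_dualM_inv_cancel g (hT1 x hx)⟩

end OmFacts

/-- Proposition 3.6: the dual of a cocompact action on a properly convex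
domain `Om` in the hyperplane at infinity is a properly tubular action on the tube over
the dual domain, whose space of directions at the vertex is the dual domain of `Om`. -/
theorem dual_action_tubular
    (n : ℕ) (hn : 2 ≤ n) (w : Vn n) (hw : w ∈ Sph n)
    (Γ : Subgroup (GLn n)) (Om : Set (Vn n))
    (hSL : ∀ g ∈ Γ, g ∈ SLpm n)
    (hOsub : Om ⊆ linkSph w) (hOpc : IsPCSub Om)
    (hOopen : IsOpenInLink w Om) (hOne : Om.Nonempty)
    (hinv : ∀ g ∈ Γ, sphAct g '' Om = Om)
    (hcc : CocompactA sphAct Γ Om) :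
    (∀ g ∈ Γ, pact (dualM g) '' tube w (dualLink w Om) = tube w (dualLink w Om)) ∧
    IsPCSub (dualLink w Om) ∧ IsOpenInLink w (dualLink w Om) ∧ (dualLink w Om).Nonempty ∧
    dirSet (tubeCore w (dualLink w Om)) w = dualLink w Om := by
  have hw1 : ‖w‖ = 1 := hw
  exact ⟨fun g hg => pact_image_tube hw1 hOsub hOopen hOne hinv hg,
    isPCSub_dualLink hw1 hOsub hOopen hOne,
    isOpenInLink_dualLink hOsub,
    dualLink_nonempty hw1 hOsub hOpc hOne,
    dirSet_tubeCore hw1 (fun φ hφ => hφ.1)⟩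

end CEnds
end
end

section
/- Let n ≥ 2 and let λ₁ ≥ λ₂ ≥ ⋯ ≥ λ_n be positive real numbers with λ₁·λ₂·⋯·λ_n = 1, λ₁ > λ₂ and λ_{n−1} > λ_n. Set ℓ := log(λ₁/λ_n), β := ℓ / log(λ₁/λ₂) and α := ℓ / log(λ₁/λ_{n−1}). Then (1/n)·(1 + (n−2)/β)·ℓ ≤ log λ₁ ≤ (1/n)·(1 + (n−2)/α)·ℓ. -/
/-!
Common definitions for formalizing "A classification of ends of properly convex
real projective orbifolds II" (Choi).

We model the projective sphere `S^n` as the unit sphere of `ℝ^{n+1}`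
(the quotient of `ℝ^{n+1} ∖ {0}` by positive scalars), on which matrices of
`GL(n+1,ℝ)` act projectively after radial normalization.  Convexity of subsets
of `S^n` is expressed through convexity of the corresponding radial cones, and
the Hilbert metric is expressed through the standard cone-gauge formula.
Smoothness of strictly convex boundary hypersurfaces is modeled by uniqueness
of supporting hyperplanes (`C¹`) together with strict convexity, and
"open cell" by homeomorphism with a Euclidean space.
-/

open Matrix Set

noncomputable section

namespace CEnds

lemma eigenvalue_aux
    (n : ℕ) (hn : 2 ≤ n) (lam : Fin n → ℝ)
    (hpos : ∀ i, 0 < lam i)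
    (hmono : ∀ i j : Fin n, i ≤ j → lam j ≤ lam i)
    (hprod : ∏ i, lam i = 1)
    (i0 i1 in1 in2 : Fin n)
    (h0 : (i0 : ℕ) = 0) (h1 : (i1 : ℕ) = 1)
    (hn1 : (in1 : ℕ) = n - 1) (hn2 : (in2 : ℕ) = n - 2)
    (htop : lam i1 < lam i0)
    (ℓ β α : ℝ)
    (hl : ℓ = Real.log (lam i0 / lam in1))
    (hβ : β = ℓ / Real.log (lam i0 / lam i1))
    (hα : α = ℓ / Real.log (lam i0 / lam in2)) :
    (1 / (n : ℝ)) * (1 + ((n : ℝ) - 2) / β) * ℓ ≤ Real.log (lam i0) ∧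
    Real.log (lam i0) ≤ (1 / (n : ℝ)) * (1 + ((n : ℝ) - 2) / α) * ℓ := by
  have hn' : (2:ℝ) ≤ (n:ℝ) := by exact_mod_cast hn
  have hnpos : (0:ℝ) < (n:ℝ) := by linarith
  set f : Fin n → ℝ := fun i => Real.log (lam i) with hf
  have hsum : ∑ i, f i = 0 := by
    rw [hf, ← Real.log_prod fun i _ => (hpos i).ne', hprod, Real.log_one]
  have hfmono : ∀ i j : Fin n, i ≤ j → f j ≤ f i := fun i j h =>
    Real.log_le_log (hpos j) (hmono i j h)
  have hne01 : i0 ≠ in1 := by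
    intro h; rw [h] at h0; omega
  have hl' : ℓ = f i0 - f in1 := by
    rw [hl, Real.log_div (hpos _).ne' (hpos _).ne']
  have hf10 : f i1 < f i0 := Real.log_lt_log (hpos _) htop
  have hfn : f in1 ≤ f i1 := hfmono i1 in1 (by rw [Fin.le_def]; omega)
  have hellpos : 0 < ℓ := by rw [hl']; linarith
  have hD1 : Real.log (lam i0 / lam i1) = f i0 - f i1 :=
    Real.log_div (hpos _).ne' (hpos _).ne'
  have hD2 : Real.log (lam i0 / lam in2) = f i0 - f in2 :=
    Real.log_div (hpos _).ne' (hpos _).ne'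
  have key : ∀ c D : ℝ, c / (ℓ / D) * ℓ = c * D := by
    intro c D
    rcases eq_or_ne D 0 with h | h
    · simp [h]
    · field_simp
  set S : Finset (Fin n) := Finset.univ \ {i0, in1} with hS
  have hsub : ({i0, in1} : Finset (Fin n)) ⊆ Finset.univ := Finset.subset_univ _
  have hcard : S.card = n - 2 := by
    rw [hS, Finset.card_sdiff_of_subset hsub, Finset.card_univ, Fintype.card_fin,
      Finset.card_pair hne01]
  have hcardR : (S.card : ℝ) = (n:ℝ) - 2 := by
    rw [hcard]; push_cast [Nat.cast_sub hn]; ring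
  have hsplit : ∑ i ∈ S, (f i0 - f i) + ∑ i ∈ {i0, in1}, (f i0 - f i)
      = ∑ i, (f i0 - f i) := Finset.sum_sdiff hsub
  have hpair : ∑ i ∈ ({i0, in1} : Finset (Fin n)), (f i0 - f i)
      = (f i0 - f i0) + (f i0 - f in1) := Finset.sum_pair hne01
  have htot : ∑ i, (f i0 - f i) = (n:ℝ) * f i0 := by
    rw [Finset.sum_sub_distrib, hsum, Finset.sum_const, Finset.card_univ,
      Fintype.card_fin, sub_zero, nsmul_eq_mul]
  have hmemS : ∀ i ∈ S, i1 ≤ i ∧ i ≤ in2 := by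
    intro i hi
    rw [hS, Finset.mem_sdiff, Finset.mem_insert, Finset.mem_singleton] at hi
    have h1' : (i : ℕ) ≠ 0 := fun h => hi.2 (Or.inl (Fin.ext (by omega)))
    have h2' : (i : ℕ) ≠ n - 1 := fun h => hi.2 (Or.inr (Fin.ext (by omega)))
    have h3 := i.isLt
    constructor <;> · rw [Fin.le_def]; omega
  have hlowS : (S.card : ℝ) * (f i0 - f i1) ≤ ∑ i ∈ S, (f i0 - f i) := by
    calc (S.card : ℝ) * (f i0 - f i1) = ∑ _i ∈ S, (f i0 - f i1) := by
          rw [Finset.sum_const, nsmul_eq_mul]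
      _ ≤ ∑ i ∈ S, (f i0 - f i) := Finset.sum_le_sum fun i hi => by
          have := hfmono i1 i (hmemS i hi).1; linarith
  have hhighS : ∑ i ∈ S, (f i0 - f i) ≤ (S.card : ℝ) * (f i0 - f in2) := by
    calc ∑ i ∈ S, (f i0 - f i) ≤ ∑ _i ∈ S, (f i0 - f in2) :=
          Finset.sum_le_sum fun i hi => by
            have := hfmono i in2 (hmemS i hi).2; linarith
      _ = (S.card : ℝ) * (f i0 - f in2) := by rw [Finset.sum_const, nsmul_eq_mul]
  have hmain : ∑ i ∈ S, (f i0 - f i) + ℓ = (n:ℝ) * f i0 := by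
    rw [hl']; rw [hpair] at hsplit; linarith [hsplit, htot]
  rw [hcardR] at hlowS hhighS
  constructor
  · have e1 : (1 / (n:ℝ)) * (1 + ((n:ℝ) - 2) / β) * ℓ
        = (ℓ + ((n:ℝ) - 2) * (f i0 - f i1)) / (n:ℝ) := by
      rw [hβ, hD1]
      linear_combination (1 / (n:ℝ)) * key ((n:ℝ) - 2) (f i0 - f i1)
    rw [e1, div_le_iff₀ hnpos]
    linarith [hlowS, hmain]
  · have e2 : (1 / (n:ℝ)) * (1 + ((n:ℝ) - 2) / α) * ℓ
        = (ℓ + ((n:ℝ) - 2) * (f i0 - f in2)) / (n:ℝ) := by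
      rw [hα, hD2]
      linear_combination (1 / (n:ℝ)) * key ((n:ℝ) - 2) (f i0 - f in2)
    rw [e2, le_div_iff₀ hnpos]
    linarith [hhighS, hmain]

/-- Theorem 4.3: the eigenvalue estimate for a biproximal element. -/
theorem eigenvalue_estimate_biproximal
    (n : ℕ) (hn : 2 ≤ n) (lam : Fin n → ℝ)
    (hpos : ∀ i, 0 < lam i)
    (hmono : ∀ i j : Fin n, i ≤ j → lam j ≤ lam i)
    (hprod : ∏ i, lam i = 1)
    (htop : lam ⟨1, by omega⟩ < lam ⟨0, by omega⟩)
    (hbot : lam ⟨n - 1, by omega⟩ < lam ⟨n - 2, by omega⟩)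
    (ℓ β α : ℝ)
    (hl : ℓ = Real.log (lam ⟨0, by omega⟩ / lam ⟨n - 1, by omega⟩))
    (hβ : β = ℓ / Real.log (lam ⟨0, by omega⟩ / lam ⟨1, by omega⟩))
    (hα : α = ℓ / Real.log (lam ⟨0, by omega⟩ / lam ⟨n - 2, by omega⟩)) :
    (1 / (n : ℝ)) * (1 + ((n : ℝ) - 2) / β) * ℓ ≤ Real.log (lam ⟨0, by omega⟩) ∧
    Real.log (lam ⟨0, by omega⟩) ≤ (1 / (n : ℝ)) * (1 + ((n : ℝ) - 2) / α) * ℓ := by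
  have p0 : 0 < n := by omega
  have p1 : 1 < n := by omega
  have pn1 : n - 1 < n := by omega
  have pn2 : n - 2 < n := by omega
  exact eigenvalue_aux n hn lam hpos hmono hprod ⟨0, p0⟩ ⟨1, p1⟩
    ⟨n - 1, pn1⟩ ⟨n - 2, pn2⟩ rfl rfl rfl rfl htop ℓ β α hl hβ hα

end CEnds
end
end

section
/- Let A₁ and A₂ be nonempty compact convex subsets of S^n that are the images of convex cones C₁∖{0} and C₂∖{0} contained in nonzero independent vector subspaces V₁, V₂ of ℝ^{n+1} (V₁ ∩ V₂ = {0}), and let A = A₁ * A₂ be their strict join, a properly convex compact set. If a group G ≤ SL±(n+1,ℝ) acts on A (g(A) = A for every g ∈ G), then G is virtually reducible: G contains a finite-index subgroup that preserves some nonzero proper linear subspace of ℝ^{n+1}. -/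
/-!
Common definitions for formalizing "A classification of ends of properly convex
real projective orbifolds II" (Choi).

We model the projective sphere `S^n` as the unit sphere of `ℝ^{n+1}`
(the quotient of `ℝ^{n+1} ∖ {0}` by positive scalars), on which matrices of
`GL(n+1,ℝ)` act projectively after radial normalization.  Convexity of subsets
of `S^n` is expressed through convexity of the corresponding radial cones, and
the Hilbert metric is expressed through the standard cone-gauge formula.
Smoothness of strictly convex boundary hypersurfaces is modeled by uniqueness
of supporting hyperplanes (`C¹`) together with strict convexity, and
"open cell" by homeomorphism with a Euclidean space.
-/

open Matrix Set

noncomputable section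

namespace CEnds

open Submodule

variable {n : ℕ}

section Abstract
variable {V : Type*} [AddCommGroup V] [Module ℝ V]

/-- A "summand pair" of the cone `C`. -/
def SPair (C F F' : Set V) : Prop :=
  F ⊆ C ∧ F' ⊆ C ∧ (0:V) ∈ F ∧ (0:V) ∈ F' ∧
    (∀ x ∈ C, ∃ a ∈ F, ∃ b ∈ F', x = a + b) ∧
    Submodule.span ℝ F ⊓ Submodule.span ℝ F' = ⊥

theorem spair_symm {C F F' : Set V} (h : SPair C F F') : SPair C F' F := by
  obtain ⟨h1,h2,h3,h4,h5,h6⟩ := h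
  refine ⟨h2,h1,h4,h3, fun x hx => ?_, by rwa [inf_comm] at h6⟩
  obtain ⟨a,ha,b,hb,rfl⟩ := h5 x hx
  exact ⟨b,hb,a,ha, add_comm a b⟩

theorem spair_face {C F F' : Set V} (hpt : ∀ x ∈ C, -x ∈ C → x = 0)
    (h : SPair C F F') {x y : V} (hx : x ∈ C) (hy : y ∈ C)
    (hxy : x + y ∈ F) : x ∈ F ∧ y ∈ F := by
  obtain ⟨hFC,hF'C,_,_,hdec,hinf⟩ := h
  obtain ⟨a,ha,b,hb,hxab⟩ := hdec x hx
  obtain ⟨c,hc,d,hd,hycd⟩ := hdec y hy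
  have hbd : b + d ∈ Submodule.span ℝ F ⊓ Submodule.span ℝ F' := by
    constructor
    · have hbd' : b + d = (x + y) - a - c := by rw [hxab, hycd]; abel
      rw [hbd']
      exact sub_mem (sub_mem (subset_span hxy) (subset_span ha)) (subset_span hc)
    · exact add_mem (subset_span hb) (subset_span hd)
  rw [hinf, Submodule.mem_bot] at hbd
  have hb0 : b = 0 := by
    refine hpt b (hF'C hb) ?_
    have : -b = d := neg_eq_of_add_eq_zero_right hbd
    rw [this]; exact hF'C hd
  have hd0 : d = 0 := by rwa [hb0, zero_add] at hbd
  constructor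
  · rwa [hxab, hb0, add_zero]
  · rwa [hycd, hd0, add_zero]

theorem spair_refine {C F F' H H' : Set V} (hpt : ∀ x ∈ C, -x ∈ C → x = 0)
    (hadd : ∀ x ∈ C, ∀ y ∈ C, x + y ∈ C)
    (hF : SPair C F F') (hH : SPair C H H') :
    SPair C (F ∩ H) {x : V | ∃ b ∈ F ∩ H', ∃ c ∈ F' ∩ H, ∃ d ∈ F' ∩ H', x = b + c + d} := by
  obtain ⟨hFC,hF'C,hF0,hF'0,hFdec,hFinf⟩ := hF
  obtain ⟨hHC,hH'C,hH0,hH'0,hHdec,hHinf⟩ := hH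
  refine ⟨fun x hx => hFC hx.1, ?_, ⟨hF0, hH0⟩, ⟨0, ⟨hF0, hH'0⟩, 0, ⟨hF'0, hH0⟩, 0, ⟨hF'0, hH'0⟩, by simp⟩, ?_, ?_⟩
  · rintro x ⟨b, hb, c, hc, d, hd, rfl⟩
    exact hadd _ (hadd _ (hFC hb.1) _ (hF'C hc.1)) _ (hF'C hd.1)
  · intro x hx
    obtain ⟨a, ha, b, hb, hxab⟩ := hFdec x hx
    obtain ⟨a₁, ha₁, a₂, ha₂, haa⟩ := hHdec a (hFC ha)
    obtain ⟨b₁, hb₁, b₂, hb₂, hbb⟩ := hHdec b (hF'C hb)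
    have haF := spair_face hpt ⟨hFC,hF'C,hF0,hF'0,hFdec,hFinf⟩ (hHC ha₁) (hH'C ha₂)
      (by rw [← haa]; exact ha)
    have hbF := spair_face hpt ⟨hF'C,hFC,hF'0,hF0,
      (fun x hx => by obtain ⟨u,hu,v,hv,rfl⟩ := hFdec x hx; exact ⟨v,hv,u,hu,add_comm u v⟩),
      (by rwa [inf_comm] at hFinf)⟩ (hHC hb₁) (hH'C hb₂) (by rw [← hbb]; exact hb)
    refine ⟨a₁, ⟨haF.1, ha₁⟩, a₂ + b₁ + b₂, ⟨a₂, ⟨haF.2, ha₂⟩, b₁, ⟨hbF.1, hb₁⟩, b₂, ⟨hbF.2, hb₂⟩, rfl⟩, ?_⟩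
    rw [hxab, haa, hbb]; abel
  · rw [eq_bot_iff]
    rintro v ⟨hv1, hv2⟩
    rw [Submodule.mem_bot]
    have hF0le : Submodule.span ℝ {x : V | ∃ b ∈ F ∩ H', ∃ c ∈ F' ∩ H, ∃ d ∈ F' ∩ H', x = b + c + d}
        ≤ Submodule.span ℝ (F ∩ H') ⊔ Submodule.span ℝ F' := by
      rw [Submodule.span_le]
      rintro x ⟨b, hb, c, hc, d, hd, rfl⟩
      exact add_mem (add_mem (Submodule.mem_sup_left (subset_span hb))
        (Submodule.mem_sup_right (subset_span hc.1))) (Submodule.mem_sup_right (subset_span hd.1))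
    obtain ⟨u, hu, w, hw, hvuw⟩ := Submodule.mem_sup.mp (hF0le hv2)
    have hwF : w ∈ Submodule.span ℝ F := by
      have : w = v - u := by rw [← hvuw]; abel
      rw [this]
      exact sub_mem (span_mono Set.inter_subset_left hv1)
        (span_mono (Set.inter_subset_left) hu)
    have hw0 : w = 0 := by
      have : w ∈ Submodule.span ℝ F ⊓ Submodule.span ℝ F' := ⟨hwF, hw⟩
      rwa [hFinf, Submodule.mem_bot] at this
    have hvu : v = u := by rw [← hvuw, hw0, add_zero]
    have : v ∈ Submodule.span ℝ H ⊓ Submodule.span ℝ H' :=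
      ⟨span_mono Set.inter_subset_right hv1, hvu ▸ span_mono Set.inter_subset_right hu⟩
    rwa [hHinf, Submodule.mem_bot] at this

/-- a minimal-dimension nonzero summand. -/
def MinS (C F F' : Set V) : Prop :=
  SPair C F F' ∧ Submodule.span ℝ F ≠ ⊥ ∧
  ∀ G G' : Set V, SPair C G G' → Submodule.span ℝ G ≠ ⊥ →
    Module.finrank ℝ (Submodule.span ℝ F) ≤ Module.finrank ℝ (Submodule.span ℝ G)

variable [FiniteDimensional ℝ V]

theorem minS_dichotomy {C F F' H H' : Set V} (hpt : ∀ x ∈ C, -x ∈ C → x = 0)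
    (hadd : ∀ x ∈ C, ∀ y ∈ C, x + y ∈ C)
    (hF : MinS C F F') (hH : MinS C H H') :
    Submodule.span ℝ F = Submodule.span ℝ H ∨ F ⊆ H' := by
  by_cases hcap : Submodule.span ℝ (F ∩ H) = ⊥
  · right; intro x hx
    obtain ⟨a, ha, b, hb, hxab⟩ := hH.1.2.2.2.2.1 x (hF.1.1 hx)
    have hab := spair_face hpt hF.1 (hH.1.1 ha) (hH.1.2.1 hb) (by rw [← hxab]; exact hx)
    have ha0 : a = 0 := by
      have : a ∈ Submodule.span ℝ (F ∩ H) := subset_span ⟨hab.1, ha⟩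
      rwa [hcap, Submodule.mem_bot] at this
    rw [hxab, ha0, zero_add]; exact hb
  · left
    have h1 : Submodule.span ℝ (F ∩ H) = Submodule.span ℝ F := by
      refine Submodule.eq_of_le_of_finrank_le (span_mono Set.inter_subset_left) ?_
      exact hF.2.2 _ _ (spair_refine hpt hadd hF.1 hH.1) hcap
    have h2 : Submodule.span ℝ (H ∩ F) = Submodule.span ℝ H := by
      refine Submodule.eq_of_le_of_finrank_le (span_mono Set.inter_subset_left) ?_
      refine hH.2.2 _ _ (spair_refine hpt hadd hH.1 hF.1) ?_
      rwa [Set.inter_comm]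
    rw [← h1, ← h2, Set.inter_comm]

theorem minS_le {C F F' C₁ C₂ : Set V} (hpt : ∀ x ∈ C, -x ∈ C → x = 0)
    (hadd : ∀ x ∈ C, ∀ y ∈ C, x + y ∈ C)
    (hF : MinS C F F') (hbase : SPair C C₁ C₂) :
    Submodule.span ℝ F ≤ Submodule.span ℝ C₁ ∨ Submodule.span ℝ F ≤ Submodule.span ℝ C₂ := by
  by_cases hcap : Submodule.span ℝ (F ∩ C₂) = ⊥
  · left
    rw [Submodule.span_le]
    intro x hx
    obtain ⟨a, ha, b, hb, hxab⟩ := hbase.2.2.2.2.1 x (hF.1.1 hx)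
    have hab := spair_face hpt hF.1 (hbase.1 ha) (hbase.2.1 hb) (by rw [← hxab]; exact hx)
    have hb0 : b = 0 := by
      have : b ∈ Submodule.span ℝ (F ∩ C₂) := subset_span ⟨hab.2, hb⟩
      rwa [hcap, Submodule.mem_bot] at this
    rw [hxab, hb0, add_zero]; exact subset_span ha
  · right
    have h1 : Submodule.span ℝ (F ∩ C₂) = Submodule.span ℝ F := by
      refine Submodule.eq_of_le_of_finrank_le (span_mono Set.inter_subset_left) ?_
      exact hF.2.2 _ _ (spair_refine hpt hadd hF.1 (spair_symm hbase)) hcap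
    rw [← h1]
    exact span_mono Set.inter_subset_right

theorem minS_finite {C : Set V} (hpt : ∀ x ∈ C, -x ∈ C → x = 0)
    (hadd : ∀ x ∈ C, ∀ y ∈ C, x + y ∈ C) :
    {W : Submodule ℝ V | ∃ F F', MinS C F F' ∧ W = Submodule.span ℝ F}.Finite := by
  classical
  set Mset := {W : Submodule ℝ V | ∃ F F', MinS C F F' ∧ W = Submodule.span ℝ F} with hMset
  have hchoice : ∀ W : Mset, ∃ F F', MinS C F F' ∧ (W : Submodule ℝ V) = Submodule.span ℝ F :=
    fun W => W.2
  choose Fw F'w hmin hspan using hchoice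
  have hind : iSupIndep (fun W : Mset => (W : Submodule ℝ V)) := by
    rw [iSupIndep_def]
    intro i
    have hle : (⨆ j, ⨆ (_ : j ≠ i), (j : Submodule ℝ V)) ≤ Submodule.span ℝ (F'w i) := by
      refine iSup_le fun j => iSup_le fun hj => ?_
      have hne : Submodule.span ℝ (Fw j) ≠ Submodule.span ℝ (Fw i) := by
        intro h; exact hj (Subtype.ext (by rw [hspan j, hspan i, h]))
      rcases minS_dichotomy hpt hadd (hmin j) (hmin i) with h | h
      · exact absurd h hne
      · rw [hspan j]
        exact span_le.mpr fun x hx => subset_span (h hx)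
    refine Disjoint.mono_right hle ?_
    rw [disjoint_iff, hspan i]
    exact (hmin i).1.2.2.2.2.2
  haveI := hind.fintypeNeBotOfFiniteDimensional
  have hfin : Finite Mset := by
    refine Finite.of_injective
      (fun j : Mset => (⟨j, by rw [hspan j]; exact (hmin j).2.1⟩ :
        {j : Mset // (j : Submodule ℝ V) ≠ ⊥})) ?_
    intro a b h
    have : (a : Submodule ℝ V) = (b : Submodule ℝ V) := congrArg Subtype.val (congrArg Subtype.val h)
    exact Subtype.ext this
  exact Set.toFinite Mset

end Abstract


/-- the linear action of a matrix, as a linear map. -/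
def lmap (g : Mat n) : Vn n →ₗ[ℝ] Vn n :=
  (((EuclideanSpace.equiv (Fin (n+1)) ℝ).symm.toLinearEquiv : (Fin (n+1) → ℝ) ≃ₗ[ℝ] Vn n) :
      (Fin (n+1) → ℝ) →ₗ[ℝ] Vn n) ∘ₗ
    (Matrix.mulVecLin g) ∘ₗ
    (((EuclideanSpace.equiv (Fin (n+1)) ℝ).toLinearEquiv : Vn n ≃ₗ[ℝ] (Fin (n+1) → ℝ)) :
      Vn n →ₗ[ℝ] (Fin (n+1) → ℝ))

theorem lmap_apply (g : Mat n) (v : Vn n) : lmap g v = mvec g v := rfl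

theorem lmap_mul (g h : Mat n) : lmap (g * h) = (lmap g) ∘ₗ (lmap h) := by
  refine LinearMap.ext fun v => ?_
  simp [lmap, Matrix.mulVecLin_mul, EuclideanSpace.equiv, PiLp.continuousLinearEquiv, Matrix.mulVec_mulVec]

theorem lmap_one : lmap (1 : Mat n) = LinearMap.id := by
  refine LinearMap.ext fun v => ?_
  simp [lmap]

theorem lmap_cancel (g : GLn n) (x : Vn n) : lmap (g : Mat n) (lmap ((g⁻¹ : GLn n) : Mat n) x) = x := by
  have h : (g : Mat n) * ((g⁻¹ : GLn n) : Mat n) = 1 := by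
    rw [← Units.val_mul, mul_inv_cancel, Units.val_one]
  rw [← LinearMap.comp_apply, ← lmap_mul, h, lmap_one, LinearMap.id_apply]

theorem lmap_cancel' (g : GLn n) (x : Vn n) : lmap ((g⁻¹ : GLn n) : Mat n) (lmap (g : Mat n) x) = x := by
  have := lmap_cancel g⁻¹ x
  rwa [inv_inv] at this

theorem lmap_injective (g : GLn n) : Function.Injective (lmap (g : Mat n)) :=
  Function.LeftInverse.injective (lmap_cancel' g)


/-- Proposition 5.7: a group acting on a strict join is virtually
reducible. -/
theorem join_virtually_reducible
    (n : ℕ) (hn : 2 ≤ n)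
    (V₁ V₂ : Submodule ℝ (Vn n)) (hV : V₁ ⊓ V₂ = ⊥)
    (hV₁ : V₁ ≠ ⊥) (hV₂ : V₂ ≠ ⊥)
    (A₁ A₂ : Set (Vn n))
    (hA₁ : A₁.Nonempty) (hA₂ : A₂.Nonempty)
    (hA₁c : IsCompact A₁) (hA₂c : IsCompact A₂)
    (hA₁s : A₁ ⊆ Sph n) (hA₂s : A₂ ⊆ Sph n)
    (hA₁V : A₁ ⊆ (V₁ : Set (Vn n))) (hA₂V : A₂ ⊆ (V₂ : Set (Vn n)))
    (hA₁cv : Convex ℝ (insert (0 : Vn n) (rayCone A₁)))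
    (hA₂cv : Convex ℝ (insert (0 : Vn n) (rayCone A₂)))
    (hpc : IsPCSub (strictJoin2 A₁ A₂))
    (G : Subgroup (GLn n)) (hSL : ∀ g ∈ G, g ∈ SLpm n)
    (hact : ∀ g ∈ G, sphAct g '' strictJoin2 A₁ A₂ = strictJoin2 A₁ A₂) :
    ∃ G' : Subgroup (GLn n), G' ≤ G ∧ (G'.subgroupOf G).index ≠ 0 ∧
      ∃ W : Submodule ℝ (Vn n), W ≠ ⊥ ∧ W ≠ ⊤ ∧
        ∀ g ∈ G', PreservesSubmodule ((g : Mat n)) W := by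
  classical
  obtain ⟨hJsub, hJconv, f, hf⟩ := hpc
  -- A₁, A₂ lie in the join
  have hA₁J : A₁ ⊆ strictJoin2 A₁ A₂ := by
    intro p hp
    obtain ⟨q, hq⟩ := hA₂
    refine ⟨1, 0, p, hp, q, hq, zero_le_one, le_refl 0, by norm_num, ?_⟩
    have hpn : ‖p‖ = 1 := hA₁s hp
    simp [nrm, hpn]
  have hA₂J : A₂ ⊆ strictJoin2 A₁ A₂ := by
    intro q hq
    obtain ⟨p, hp⟩ := hA₁
    refine ⟨0, 1, p, hp, q, hq, le_refl 0, zero_le_one, by norm_num, ?_⟩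
    have hqn : ‖q‖ = 1 := hA₂s hq
    simp [nrm, hqn]
  have hfJ : ∀ v ∈ strictJoin2 A₁ A₂, 0 < f v := fun v hv => hf v (subset_closure hv)
  have hfray : ∀ x ∈ rayCone (strictJoin2 A₁ A₂), 0 < f x := by
    rintro x ⟨v, hv, c, hc, rfl⟩
    rw [_root_.map_smul, smul_eq_mul]
    exact mul_pos hc (hfJ v hv)
  set C : Set (Vn n) := insert 0 (rayCone (strictJoin2 A₁ A₂)) with hCdef
  have hCconv : Convex ℝ C := hJconv
  have hpt : ∀ x ∈ C, -x ∈ C → x = 0 := by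
    intro x hx hnx
    rcases hx with rfl | hx
    · rfl
    rcases hnx with h0 | hnx
    · exact neg_eq_zero.mp h0
    · exfalso
      have h1 := hfray x hx
      have h2 := hfray _ hnx
      rw [_root_.map_neg] at h2
      linarith
  have hscale : ∀ c : ℝ, 0 < c → ∀ z ∈ C, c • z ∈ C := by
    intro c hc z hz
    rcases hz with rfl | ⟨v, hv, d, hd, rfl⟩
    · rw [smul_zero]; exact Set.mem_insert _ _
    · exact Set.mem_insert_of_mem _ ⟨v, hv, c * d, mul_pos hc hd, smul_smul c d v⟩
  have hadd : ∀ x ∈ C, ∀ y ∈ C, x + y ∈ C := by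
    intro x hx y hy
    have hmid : (1/2 : ℝ) • x + (1/2 : ℝ) • y ∈ C :=
      hCconv hx hy (by norm_num) (by norm_num) (by norm_num)
    have h2 : (2:ℝ) • ((1/2 : ℝ) • x + (1/2 : ℝ) • y) ∈ C := hscale 2 (by norm_num) _ hmid
    have heq : (2:ℝ) • ((1/2 : ℝ) • x + (1/2 : ℝ) • y) = x + y := by
      rw [smul_add, smul_smul, smul_smul]; norm_num
    rwa [heq] at h2
  set C₁ : Set (Vn n) := insert 0 (rayCone A₁) with hC₁def
  set C₂ : Set (Vn n) := insert 0 (rayCone A₂) with hC₂def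
  have hC₁sub : ∀ t : ℝ, 0 ≤ t → ∀ p ∈ A₁, t • p ∈ C₁ := by
    intro t ht p hp
    rcases lt_or_eq_of_le ht with ht' | ht'
    · exact Set.mem_insert_of_mem _ ⟨p, hp, t, ht', rfl⟩
    · rw [← ht', zero_smul]; exact Set.mem_insert _ _
  have hC₂sub : ∀ t : ℝ, 0 ≤ t → ∀ q ∈ A₂, t • q ∈ C₂ := by
    intro t ht q hq
    rcases lt_or_eq_of_le ht with ht' | ht'
    · exact Set.mem_insert_of_mem _ ⟨q, hq, t, ht', rfl⟩
    · rw [← ht', zero_smul]; exact Set.mem_insert _ _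
  have hspanV₁ : Submodule.span ℝ C₁ ≤ V₁ := by
    rw [Submodule.span_le]
    rintro x (rfl | ⟨p, hp, c, hc, rfl⟩)
    · exact V₁.zero_mem
    · exact V₁.smul_mem c (hA₁V hp)
  have hspanV₂ : Submodule.span ℝ C₂ ≤ V₂ := by
    rw [Submodule.span_le]
    rintro x (rfl | ⟨q, hq, c, hc, rfl⟩)
    · exact V₂.zero_mem
    · exact V₂.smul_mem c (hA₂V hq)
  have hbase : SPair C C₁ C₂ := by
    refine ⟨?_, ?_, Set.mem_insert _ _, Set.mem_insert _ _, ?_, ?_⟩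
    · rintro x (rfl | ⟨p, hp, c, hc, rfl⟩)
      · exact Set.mem_insert _ _
      · exact Set.mem_insert_of_mem _ ⟨p, hA₁J hp, c, hc, rfl⟩
    · rintro x (rfl | ⟨q, hq, c, hc, rfl⟩)
      · exact Set.mem_insert _ _
      · exact Set.mem_insert_of_mem _ ⟨q, hA₂J hq, c, hc, rfl⟩
    · rintro x (rfl | ⟨w, hw, c, hc, rfl⟩)
      · exact ⟨0, Set.mem_insert _ _, 0, Set.mem_insert _ _, (add_zero (0:Vn n)).symm⟩
      · obtain ⟨a, b, p, hp, q, hq, ha, hb, hab, hw'⟩ := hw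
        have hfp := hfJ p (hA₁J hp)
        have hfq := hfJ q (hA₂J hq)
        have hor : 0 < a ∨ 0 < b := by
          by_contra hcon
          push_neg at hcon
          linarith [hcon.1, hcon.2]
        have hfu : 0 < f (a • p + b • q) := by
          have heval : f (a • p + b • q) = a * f p + b * f q := by
            rw [_root_.map_add, _root_.map_smul, _root_.map_smul, smul_eq_mul, smul_eq_mul]
          rw [heval]
          rcases hor with h | h
          · nlinarith
          · nlinarith
        have hune : a • p + b • q ≠ 0 := by
          intro h0; rw [h0, _root_.map_zero] at hfu; exact lt_irrefl 0 hfu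
        have hupos : 0 < ‖a • p + b • q‖ := norm_pos_iff.mpr hune
        have hrpos : 0 < c * ‖a • p + b • q‖⁻¹ := mul_pos hc (inv_pos.mpr hupos)
        refine ⟨(c * ‖a • p + b • q‖⁻¹ * a) • p,
          hC₁sub _ (by positivity) p hp,
          (c * ‖a • p + b • q‖⁻¹ * b) • q,
          hC₂sub _ (by positivity) q hq, ?_⟩
        rw [hw']
        simp only [nrm]
        module
    · rw [eq_bot_iff, ← hV]
      exact le_inf (inf_le_left.trans hspanV₁) (inf_le_right.trans hspanV₂)
  have hptC₁ : ∀ p ∈ A₁, p ∈ C₁ := fun p hp =>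
    Set.mem_insert_of_mem _ ⟨p, hp, 1, one_pos, (one_smul ℝ p).symm⟩
  have hne₁ : Submodule.span ℝ C₁ ≠ ⊥ := by
    obtain ⟨p, hp⟩ := hA₁
    intro h
    have hmem : p ∈ Submodule.span ℝ C₁ := Submodule.subset_span (hptC₁ p hp)
    rw [h, Submodule.mem_bot] at hmem
    have hfp := hfJ p (hA₁J hp)
    rw [hmem, _root_.map_zero] at hfp
    exact lt_irrefl 0 hfp
  -- minimal-dimension summands
  have hSne : (sInf {m : ℕ | ∃ F F' : Set (Vn n), SPair C F F' ∧
      Submodule.span ℝ F ≠ ⊥ ∧ Module.finrank ℝ (Submodule.span ℝ F) = m}) ∈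
        {m : ℕ | ∃ F F' : Set (Vn n), SPair C F F' ∧
          Submodule.span ℝ F ≠ ⊥ ∧ Module.finrank ℝ (Submodule.span ℝ F) = m} :=
    Nat.sInf_mem ⟨_, C₁, C₂, hbase, hne₁, rfl⟩
  obtain ⟨F₀, F₀', hsp₀, hne₀, hdim₀⟩ := hSne
  have hmin₀ : MinS C F₀ F₀' := by
    refine ⟨hsp₀, hne₀, fun G₁ G₁' hG₁ hG₁ne => ?_⟩
    rw [hdim₀]
    exact Nat.sInf_le ⟨G₁, G₁', hG₁, hG₁ne, rfl⟩
  set W₀ : Submodule ℝ (Vn n) := Submodule.span ℝ F₀ with hW₀def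
  -- invariance of the cone
  have hmono : ∀ g ∈ G, ∀ x ∈ C, lmap (g : Mat n) x ∈ C := by
    intro g hg x hx
    rcases hx with rfl | ⟨v, hv, c, hc, rfl⟩
    · rw [_root_.map_zero]; exact Set.mem_insert _ _
    · have hv0 : v ≠ 0 := by
        intro h0
        have := hfJ v hv
        rw [h0, _root_.map_zero] at this
        exact lt_irrefl 0 this
      have hm0 : lmap (g : Mat n) v ≠ 0 := by
        intro h0
        have hcg := congrArg (lmap ((g⁻¹ : GLn n) : Mat n)) h0
        rw [lmap_cancel' g, _root_.map_zero] at hcg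
        exact hv0 hcg
      have hnrm : nrm (mvec (g : Mat n) v) ∈ strictJoin2 A₁ A₂ := by
        rw [← hact g hg]
        exact Set.mem_image_of_mem _ hv
      have hmpos : 0 < ‖lmap (g : Mat n) v‖ := norm_pos_iff.mpr hm0
      refine Set.mem_insert_of_mem _ ⟨nrm (mvec (g : Mat n) v), hnrm,
        c * ‖lmap (g : Mat n) v‖, mul_pos hc hmpos, ?_⟩
      rw [_root_.map_smul, ← lmap_apply]
      simp only [nrm]
      rw [smul_smul, mul_assoc, mul_inv_cancel₀ (ne_of_gt hmpos), mul_one]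
  have htrans : ∀ g ∈ G, ∀ F F' : Set (Vn n), SPair C F F' →
      SPair C (lmap (g : Mat n) '' F) (lmap (g : Mat n) '' F') := by
    intro g hg F F' hFP
    obtain ⟨h1, h2, h3, h4, h5, h6⟩ := hFP
    refine ⟨?_, ?_, ⟨0, h3, _root_.map_zero _⟩, ⟨0, h4, _root_.map_zero _⟩, ?_, ?_⟩
    · rintro y ⟨x, hx, rfl⟩; exact hmono g hg x (h1 hx)
    · rintro y ⟨x, hx, rfl⟩; exact hmono g hg x (h2 hx)
    · intro x hx
      obtain ⟨a, ha, b, hb, hyab⟩ :=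
        h5 (lmap ((g⁻¹ : GLn n) : Mat n) x) (hmono g⁻¹ (inv_mem hg) x hx)
      refine ⟨lmap (g : Mat n) a, ⟨a, ha, rfl⟩, lmap (g : Mat n) b, ⟨b, hb, rfl⟩, ?_⟩
      rw [← _root_.map_add, ← hyab, lmap_cancel]
    · rw [Submodule.span_image, Submodule.span_image,
        ← Submodule.map_inf (lmap (g : Mat n)) (lmap_injective g), h6, Submodule.map_bot]
  have hfrk : ∀ (g : GLn n) (F : Set (Vn n)),
      Module.finrank ℝ (Submodule.span ℝ (lmap (g : Mat n) '' F))
        = Module.finrank ℝ (Submodule.span ℝ F) := by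
    intro g F
    have hc1 : (lmap (g : Mat n)) ∘ₗ (lmap ((g⁻¹ : GLn n) : Mat n)) = LinearMap.id :=
      LinearMap.ext fun x => lmap_cancel g x
    have hc2 : (lmap ((g⁻¹ : GLn n) : Mat n)) ∘ₗ (lmap (g : Mat n)) = LinearMap.id :=
      LinearMap.ext fun x => lmap_cancel' g x
    rw [Submodule.span_image]
    exact LinearEquiv.finrank_map_eq
      (LinearEquiv.ofLinear (lmap (g : Mat n)) (lmap ((g⁻¹ : GLn n) : Mat n)) hc1 hc2) _
  have hMtrans : ∀ g ∈ G, ∀ F F' : Set (Vn n), MinS C F F' →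
      MinS C (lmap (g : Mat n) '' F) (lmap (g : Mat n) '' F') := by
    intro g hg F F' hFM
    refine ⟨htrans g hg F F' hFM.1, ?_, ?_⟩
    · intro h0
      have hz : Module.finrank ℝ (Submodule.span ℝ (lmap (g : Mat n) '' F)) = 0 := by
        rw [h0]; exact Submodule.finrank_eq_zero.mpr rfl
      rw [hfrk g F] at hz
      exact hFM.2.1 (Submodule.finrank_eq_zero.mp hz)
    · intro G₁ G₁' hG₁ hG₁ne
      rw [hfrk g F]
      exact hFM.2.2 _ _ hG₁ hG₁ne
  have hfinM : {W : Submodule ℝ (Vn n) | ∃ F F', MinS C F F' ∧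
      W = Submodule.span ℝ F}.Finite := minS_finite hpt hadd
  haveI hMfin : Finite ↥{W : Submodule ℝ (Vn n) | ∃ F F', MinS C F F' ∧
      W = Submodule.span ℝ F} := hfinM.to_subtype
  have hmemM : ∀ g ∈ G, Submodule.map (lmap (g : Mat n)) W₀ ∈
      {W : Submodule ℝ (Vn n) | ∃ F F', MinS C F F' ∧ W = Submodule.span ℝ F} := by
    intro g hg
    exact ⟨lmap (g : Mat n) '' F₀, lmap (g : Mat n) '' F₀', hMtrans g hg _ _ hmin₀,
      (Submodule.span_image _).symm⟩
  -- algebra of the action on submodules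
  have hmapmul : ∀ (x y : GLn n) (W : Submodule ℝ (Vn n)),
      Submodule.map (lmap ((x * y : GLn n) : Mat n)) W
        = Submodule.map (lmap (x : Mat n)) (Submodule.map (lmap (y : Mat n)) W) := by
    intro x y W
    rw [Units.val_mul, lmap_mul, Submodule.map_comp]
  have hmapone : ∀ W : Submodule ℝ (Vn n),
      Submodule.map (lmap ((1 : GLn n) : Mat n)) W = W := by
    intro W
    rw [Units.val_one, lmap_one, Submodule.map_id]
  have hinvstab : ∀ g : GLn n, Submodule.map (lmap (g : Mat n)) W₀ = W₀ →
      Submodule.map (lmap ((g⁻¹ : GLn n) : Mat n)) W₀ = W₀ := by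
    intro g hgW
    conv_lhs => rw [← hgW]
    rw [← hmapmul g⁻¹ g, inv_mul_cancel, hmapone]
  -- the subgroup
  let G' : Subgroup (GLn n) :=
    { carrier := {g : GLn n | g ∈ G ∧ Submodule.map (lmap (g : Mat n)) W₀ = W₀},
      mul_mem' := by
        rintro a b ⟨haG, haW⟩ ⟨hbG, hbW⟩
        exact ⟨mul_mem haG hbG, by rw [hmapmul, hbW, haW]⟩,
      one_mem' := ⟨one_mem G, hmapone _⟩,
      inv_mem' := by
        rintro a ⟨haG, haW⟩
        exact ⟨inv_mem haG, hinvstab a haW⟩ }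
  have hmemG' : ∀ g : GLn n, g ∈ G' ↔
      (g ∈ G ∧ Submodule.map (lmap (g : Mat n)) W₀ = W₀) := fun g => Iff.rfl
  refine ⟨G', fun g hg => ((hmemG' g).mp hg).1, ?_, ?_⟩
  · -- finite index
    set H := G'.subgroupOf G with hHdef
    have key : ∀ a b : ↥G,
        Submodule.map (lmap ((a : GLn n) : Mat n)) W₀
          = Submodule.map (lmap ((b : GLn n) : Mat n)) W₀ ↔ a⁻¹ * b ∈ H := by
      intro a b
      have hco : (((a⁻¹ * b : ↥G) : GLn n) : Mat n) = ((((a : GLn n)⁻¹ * (b : GLn n) : GLn n)) : Mat n) :=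
        rfl
      constructor
      · intro h
        rw [hHdef, Subgroup.mem_subgroupOf, hmemG']
        refine ⟨(a⁻¹ * b : ↥G).2, ?_⟩
        rw [hco, hmapmul ((a : GLn n)⁻¹) (b : GLn n) W₀, ← h,
          ← hmapmul ((a : GLn n)⁻¹) (a : GLn n) W₀, inv_mul_cancel, hmapone]
      · intro h
        rw [hHdef, Subgroup.mem_subgroupOf, hmemG'] at h
        have h2 := h.2
        rw [hco, hmapmul ((a : GLn n)⁻¹) (b : GLn n) W₀] at h2
        have h3 := congrArg (Submodule.map (lmap ((a : GLn n) : Mat n))) h2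
        rw [← hmapmul (a : GLn n) ((a : GLn n)⁻¹) (Submodule.map (lmap ((b : GLn n) : Mat n)) W₀),
          mul_inv_cancel, hmapone] at h3
        exact h3.symm
    let Fq : ↥G ⧸ H → Submodule ℝ (Vn n) := fun x =>
      Quotient.liftOn' x (fun a : ↥G => Submodule.map (lmap ((a : GLn n) : Mat n)) W₀)
        (fun a b hab => (key a b).mpr (QuotientGroup.leftRel_apply.mp hab))
    have hval : ∀ x : ↥G ⧸ H,
        Fq x ∈ {W : Submodule ℝ (Vn n) | ∃ F F', MinS C F F' ∧ W = Submodule.span ℝ F} :=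
      fun x => Quotient.inductionOn' x (fun a => hmemM (a : GLn n) a.2)
    have hfinQ : Finite (↥G ⧸ H) := by
      refine Finite.of_injective (fun x : ↥G ⧸ H =>
        (⟨Fq x, hval x⟩ :
          ↥{W : Submodule ℝ (Vn n) | ∃ F F', MinS C F F' ∧ W = Submodule.span ℝ F})) ?_
      intro x y
      refine Quotient.inductionOn₂' x y ?_
      intro a b h
      have h2 : Fq (Quotient.mk'' a) = Fq (Quotient.mk'' b) := congrArg Subtype.val h
      exact Quotient.sound' (QuotientGroup.leftRel_apply.mpr ((key a b).mp h2))
    exact @Subgroup.index_ne_zero_of_finite _ _ H hfinQ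
  · refine ⟨W₀, hne₀, ?_, ?_⟩
    · -- W₀ ≠ ⊤
      have hV₁top : V₁ ≠ ⊤ := by
        intro h; rw [h, top_inf_eq] at hV; exact hV₂ hV
      have hV₂top : V₂ ≠ ⊤ := by
        intro h; rw [h, inf_top_eq] at hV; exact hV₁ hV
      rcases minS_le hpt hadd hmin₀ hbase with h | h
      · intro htop
        exact hV₁top (top_le_iff.mp (htop ▸ (h.trans hspanV₁)))
      · intro htop
        exact hV₂top (top_le_iff.mp (htop ▸ (h.trans hspanV₂)))
    · intro g hg x hx
      rw [← lmap_apply, ← ((hmemG' g).mp hg).2]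
      exact Submodule.mem_map_of_mem hx


end CEnds
end
end
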